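/- arXiv:1110.0304 — 6 statements merged into one kernel-verified Lean document; each statement's English description precedes it below -/
import Mathlib

section
/- If A is reducible to itself with tiny use (A ≤_{T(tu)} A), then A is computable. -/
open scoped Classical
open Filter

/-- The prefix of length `n` of a set (element of Cantor space), as a binary string. -/
def opre (B : ℕ → Bool) (n : ℕ) : List Bool := (List.range n).map B

/-- An order function: computable, nondecreasing and unbounded. -/
def IsOrder (f : ℕ → ℕ) : Prop := Computable f ∧ Monotone f ∧ ∀ m, ∃ n, m ≤ f n

/-- The discrete inverse of a nondecreasing unbounded function:
`discInv f k` is the greatest `n` with `f n ≤ k`. -/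
noncomputable def discInv (f : ℕ → ℕ) (k : ℕ) : ℕ := sSup {n | f n ≤ k}

/-- There is a Turing reduction computing the function `f` from the set oracle `B`
whose use on input `n` is bounded by `u n`: a monotone partial computable
string functional which computes `f n` from the prefix `B↾(u n)`. -/
def RedUse (f : ℕ → ℕ) (B : ℕ → Bool) (u : ℕ → ℕ) : Prop :=
  ∃ F : List Bool → ℕ →. ℕ, Partrec₂ F ∧
    (∀ (σ τ : List Bool) (n y : ℕ), σ <+: τ → y ∈ F σ n → y ∈ F τ n) ∧
    ∀ n, f n ∈ F (opre B (u n)) n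

/-- A set, viewed as a `ℕ`-valued function. -/
def natOf (A : ℕ → Bool) : ℕ → ℕ := fun n => cond (A n) 1 0

/-- Turing reduction of the set `A` to the set `B` with use bounded by `u`. -/
def SRedUse (A B : ℕ → Bool) (u : ℕ → ℕ) : Prop := RedUse (natOf A) B u

/-- Turing reducibility of a function to a set. -/
def TRed (f : ℕ → ℕ) (B : ℕ → Bool) : Prop := ∃ u, RedUse f B u

/-- Weak truth-table reducibility of a function to a set: the use is computably bounded. -/
def WttRed (f : ℕ → ℕ) (B : ℕ → Bool) : Prop := ∃ u, Computable u ∧ RedUse f B u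

/-- Weak truth-table reducibility between sets. -/
def SWttRed (A B : ℕ → Bool) : Prop := WttRed (natOf A) B

/-- `A` is reducible to `B` with tiny use: for every order function `h` there is
a Turing reduction of `A` to `B` with use bounded by `h`. -/
def TtuRed (A B : ℕ → Bool) : Prop := ∀ h, IsOrder h → SRedUse A B h

/-- `A` is uniformly reducible to `B` with tiny use: a single Turing reduction of
`A` to `B` whose use function is dominated by every order function. -/
def UTtuRed (A B : ℕ → Bool) : Prop :=
  ∃ u : ℕ → ℕ, (∀ h, IsOrder h → ∀ᶠ n in atTop, u n ≤ h n) ∧ SRedUse A B u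

/-- The effective join of two sets. -/
def join (A B : ℕ → Bool) : ℕ → Bool := fun n => if n % 2 = 0 then A (n / 2) else B (n / 2)

/-- The halting set `K = {e : φ_e(e)↓}`. -/
noncomputable def Khalt : ℕ → Bool := fun e =>
  decide (((Denumerable.ofNat Nat.Partrec.Code e).eval e).Dom)

/-- `U` is an optimal machine (for plain Kolmogorov complexity on binary strings). -/
def Optimal (U : List Bool →. List Bool) : Prop :=
  Partrec U ∧ ∀ M : List Bool →. List Bool, Partrec M →
    ∃ c, ∀ (p x : List Bool), x ∈ M p → ∃ q : List Bool, q.length ≤ p.length + c ∧ x ∈ U q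

/-- Plain Kolmogorov complexity of a string relative to the machine `U`. -/
noncomputable def Cplx (U : List Bool →. List Bool) (x : List Bool) : ℕ :=
  sInf { k | ∃ p : List Bool, p.length = k ∧ x ∈ U p }

/-- Kolmogorov complexity of a natural number (coded as a binary string). -/
noncomputable def CplxN (U : List Bool →. List Bool) (n : ℕ) : ℕ := Cplx U (Nat.bits n)

/-- `A` is anti-complex: for every order function `f`, `C(A↾f(n)) ≤ n` for almost all `n`. -/
def AntiComplex (U : List Bool →. List Bool) (A : ℕ → Bool) : Prop :=
  ∀ f, IsOrder f → ∀ᶠ n in atTop, Cplx U (opre A (f n)) ≤ n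

/-- `g_A(k)` is the least `n` such that `C(A↾m) > k` for all `m ≥ n`. -/
noncomputable def gA (U : List Bool →. List Bool) (A : ℕ → Bool) (k : ℕ) : ℕ :=
  sInf {n | ∀ m, n ≤ m → k < Cplx U (opre A m)}

/-- Coding of binary strings by natural numbers, ordered by length first. -/
def strToNat (l : List Bool) : ℕ := l.foldl (fun a b => 2 * a + cond b 1 0) 1 - 1

/-- The least `U`-description of the string `x`, as a natural number. -/
noncomputable def leastDesc (U : List Bool →. List Bool) (x : List Bool) : ℕ :=
  sInf {m | ∃ p : List Bool, strToNat p = m ∧ x ∈ U p}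

/-- The set `A* = {(A↾g_A(k))* : k ∈ ℕ}` of least descriptions of the segments `A↾g_A(k)`. -/
noncomputable def Astar (U : List Bool →. List Bool) (A : ℕ → Bool) : ℕ → Bool :=
  fun m => decide (∃ k, m = leastDesc U (opre A (gA U A k)))

/-- A c.e. trace for `f` bounded by `h`: a uniformly c.e. sequence of finite sets
`T n` with `f n ∈ T n` and `|T n| ≤ h n`. -/
def CeTrace (h f : ℕ → ℕ) : Prop :=
  ∃ S : ℕ → ℕ → Prop, REPred (fun p : ℕ × ℕ => S p.1 p.2) ∧
    ∀ n, S n (f n) ∧ { y | S n y }.Finite ∧ Set.ncard { y | S n y } ≤ h n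

/-- The wtt-degree of `A` is r.e. traceable. -/
def ReTraceableWtt (A : ℕ → Bool) : Prop :=
  ∃ h, IsOrder h ∧ ∀ f : ℕ → ℕ, WttRed f A → CeTrace h f

/-- A computable trace for `f` bounded by `h` (finite sets given by canonical indices,
here: by computable lists). -/
def CompTrace (h f : ℕ → ℕ) : Prop :=
  ∃ T : ℕ → List ℕ, Computable T ∧ ∀ n, f n ∈ T n ∧ (T n).length ≤ h n

/-- Truth-table reducibility of a function to a set: a total computable functional
with computably bounded use. -/
def TtRed (f : ℕ → ℕ) (A : ℕ → Bool) : Prop :=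
  ∃ u : ℕ → ℕ, Computable u ∧ ∃ F : List Bool → ℕ → ℕ, Computable₂ F ∧
    ∀ n, F (opre A (u n)) n = f n

/-- `A` is Schnorr trivial (via the Franklin–Stephan characterisation:
its truth-table degree is computably traceable). -/
def SchnorrTrivial (A : ℕ → Bool) : Prop :=
  ∃ h, IsOrder h ∧ ∀ f : ℕ → ℕ, TtRed f A → CompTrace h f

/-- `A` is truth-table reducible to `B` with tiny use: for every order function `h`
there is a total computable functional computing `A` from `B` with use bounded by `h`. -/
def TttuRed (A B : ℕ → Bool) : Prop :=
  ∀ h, IsOrder h → ∃ F : List Bool → ℕ → Bool, Computable₂ F ∧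
    ∀ n, F (opre B (h n)) n = A n

/-- `g` dominates every computable function. -/
def Dominant (g : ℕ → ℕ) : Prop :=
  ∀ f : ℕ → ℕ, Computable f → ∀ᶠ n in atTop, f n ≤ g n

/-- Prefix of a function oracle. -/
def fpre (f : ℕ → ℕ) (n : ℕ) : List ℕ := (List.range n).map f

/-- Reduction of a set `A` to a function oracle `f` with use bounded by `u`. -/
def RedUseFn (A : ℕ → Bool) (f : ℕ → ℕ) (u : ℕ → ℕ) : Prop :=
  ∃ F : List ℕ → ℕ →. ℕ, Partrec₂ F ∧
    (∀ (σ τ : List ℕ) (n y : ℕ), σ <+: τ → y ∈ F σ n → y ∈ F τ n) ∧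
    ∀ n, natOf A n ∈ F (fpre f (u n)) n

/-- Uniform reducibility with tiny use to a function oracle. -/
def UTtuRedFn (A : ℕ → Bool) (f : ℕ → ℕ) : Prop :=
  ∃ u : ℕ → ℕ, (∀ h, IsOrder h → ∀ᶠ n in atTop, u n ≤ h n) ∧ RedUseFn A f u

/-- The graph of `f`, coded as a set via the standard pairing. -/
def graphOf (f : ℕ → ℕ) : ℕ → Bool :=
  fun m => decide (f (Nat.unpair m).1 = (Nat.unpair m).2)

/-- The real number with binary expansion `X`. -/
noncomputable def realOf (X : ℕ → Bool) : ℝ := ∑' n, cond (X n) (((2:ℝ) ^ (n + 1))⁻¹) 0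

/-- `X` is a left-c.e. real. -/
def LeftCE (X : ℕ → Bool) : Prop :=
  ∃ q : ℕ → ℚ, Computable q ∧ Monotone q ∧
    Tendsto (fun n => (q n : ℝ)) atTop (nhds (realOf X))

/-- `X` is Martin-Löf random: it passes every Martin-Löf test (given as a uniformly
c.e. sequence of sets of strings of measure at most `2^{-n}`). -/
def MLRandom (X : ℕ → Bool) : Prop :=
  ∀ W : ℕ → List Bool → Prop,
    REPred (fun p : ℕ × List Bool => W p.1 p.2) →
    (∀ n, ∑' σ : {σ : List Bool // W n σ}, ((2:ℝ) ^ (σ : List Bool).length)⁻¹ ≤ ((2:ℝ) ^ n)⁻¹) →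
    ∃ n, ∀ σ, W n σ → opre X σ.length ≠ σ

/-- `A` is a c.e. set. -/
def CeSet (A : ℕ → Bool) : Prop := REPred (fun n => A n = true)

theorem stmt3 (A : ℕ → Bool) (h : TtuRed A A) : Computable A := by
  have hid : IsOrder id := ⟨Computable.id, monotone_id, fun m => ⟨m, le_rfl⟩⟩
  obtain ⟨F, hF, -, hFA⟩ := h id hid
  -- G n computes opre A n
  set G : ℕ →. List Bool := fun n =>
    n.rec (Part.some ([] : List Bool))
      (fun y IH => IH.bind fun σ => (F σ y).map fun v => σ ++ [decide (v = 1)]) with hG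
  have hGpr : Partrec G := by
    apply Partrec.nat_rec (Computable.id) (Computable.const ([] : List Bool)).partrec
      (h := fun (_ : ℕ) (p : ℕ × List Bool) => (F p.2 p.1).map fun v => p.2 ++ [decide (v = 1)])
    exact Partrec.to₂ <| Partrec.map
      (hF.comp (Computable.snd.comp Computable.snd) (Computable.fst.comp Computable.snd))
      (Primrec.list_append.comp
        ((Primrec.snd.comp Primrec.snd).comp Primrec.fst)
        (Primrec.list_cons.comp
          (Primrec.eq.comp Primrec.snd (Primrec.const 1)).decide
          (Primrec.const []))).to_comp.to₂
  have hmem : ∀ n, opre A n ∈ G n := by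
    intro n
    induction n with
    | zero => simp [hG, opre]
    | succ n ih =>
      simp only [hG] at ih ⊢
      refine Part.mem_bind_iff.2 ⟨_, ih, ?_⟩
      refine (Part.mem_map_iff _).2 ⟨_, hFA n, ?_⟩
      have : decide (natOf A n = 1) = A n := by
        cases hAn : A n <;> simp [natOf, hAn]
      rw [this]
      simp [opre, List.range_succ]
  have : Partrec fun n => (G (n + 1)).map fun σ => σ.getD n false := by
    exact Partrec.map (hGpr.comp (Computable.succ))
      ((Primrec.list_getD false).comp Primrec.snd Primrec.fst).to_comp.to₂
  refine this.of_eq_tot fun n => ?_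
  refine (Part.mem_map_iff _).2 ⟨_, hmem (n + 1), ?_⟩
  simp [opre, List.range_succ]
end

section
/- The relation ≤_{T(tu)} is invariant under weak truth-table equivalence: if A ≤_{wtt} E and E ≤_{T(tu)} B then A ≤_{T(tu)} B; and if A ≤_{T(tu)} E and E ≤_{wtt} B then A ≤_{T(tu)} B. -/
open scoped Classical
open Filter

/- ### auxiliary lemmas -/

lemma opre_prefix (B : ℕ → Bool) {m n : ℕ} (h : m ≤ n) : opre B m <+: opre B n := by
  have : opre B m = (opre B n).take m := by
    simp [opre, ← List.map_take, List.take_range, Nat.min_eq_left h]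
  rw [this]; exact List.take_prefix _ _

lemma opre_succ (B : ℕ → Bool) (n : ℕ) : opre B (n+1) = opre B n ++ [B n] := by
  simp [opre, List.range_succ]

lemma natOf_decide (E : ℕ → Bool) (m : ℕ) : decide (natOf E m = 1) = E m := by
  cases h : E m <;> simp [natOf, h]

lemma RedUse.mono_use {f : ℕ → ℕ} {B : ℕ → Bool} {u u' : ℕ → ℕ}
    (h : RedUse f B u) (hle : ∀ n, u n ≤ u' n) : RedUse f B u' := by
  obtain ⟨F, hF, hFm, hFv⟩ := h
  exact ⟨F, hF, hFm, fun n => hFm _ _ _ _ (opre_prefix B (hle n)) (hFv n)⟩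

/- ### the bit-extraction functional -/

def ebits (G : List Bool → ℕ →. ℕ) (σ : List Bool) : ℕ → Part (List Bool)
  | 0 => Part.some []
  | (k+1) => (ebits G σ k).bind fun l => (G σ k).map fun z => l ++ [decide (z = 1)]

lemma ebits_mem {E : ℕ → Bool} (G : List Bool → ℕ →. ℕ) (σ : List Bool) (k : ℕ)
    (hm : ∀ m, m < k → natOf E m ∈ G σ m) : opre E k ∈ ebits G σ k := by
  induction k with
  | zero => simp [ebits, opre]
  | succ k ih =>
    rw [opre_succ]
    refine Part.mem_bind_iff.mpr ⟨_, ih (fun m hm' => hm m (hm'.trans (Nat.lt_succ_self _))), ?_⟩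
    refine (Part.mem_map_iff _).mpr ⟨natOf E k, hm k (Nat.lt_succ_self _), ?_⟩
    rw [natOf_decide]

lemma ebits_mono {G : List Bool → ℕ →. ℕ}
    (hGm : ∀ (σ τ : List Bool) (n y : ℕ), σ <+: τ → y ∈ G σ n → y ∈ G τ n)
    {σ τ : List Bool} (hστ : σ <+: τ) :
    ∀ (k : ℕ) (l : List Bool), l ∈ ebits G σ k → l ∈ ebits G τ k := by
  intro k
  induction k with
  | zero => intro l hl; exact hl
  | succ k ih =>
    intro l hl
    obtain ⟨l', hl', hl2⟩ := Part.mem_bind_iff.mp hl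
    obtain ⟨z, hz, hzl⟩ := (Part.mem_map_iff _).mp hl2
    exact Part.mem_bind_iff.mpr ⟨l', ih l' hl',
      (Part.mem_map_iff _).mpr ⟨z, hGm _ _ _ _ hστ hz, hzl⟩⟩

lemma ebits_partrec {G : List Bool → ℕ →. ℕ} (hG : Partrec₂ G) :
    Partrec (fun a : List Bool × ℕ => ebits G a.1 a.2) := by
  have step : Partrec₂ (fun (a : List Bool × ℕ) (p : ℕ × List Bool) =>
      (G a.1 p.1).map fun z => p.2 ++ [decide (z = 1)]) := by
    have h1 : Partrec (fun x : (List Bool × ℕ) × (ℕ × List Bool) => G x.1.1 x.2.1) :=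
      hG.comp (Computable.fst.comp Computable.fst) (Computable.fst.comp Computable.snd)
    have h2 : Computable₂ (fun (x : (List Bool × ℕ) × (ℕ × List Bool)) (z : ℕ) =>
        x.2.2 ++ [decide (z = 1)]) := by
      have hd : Computable (fun y : ((List Bool × ℕ) × (ℕ × List Bool)) × ℕ =>
          decide (y.2 = 1)) :=
        (Primrec₂.to_comp Primrec.eq.decide).comp Computable.snd (Computable.const 1)
      exact (Computable.list_append.comp
        (Computable.snd.comp (Computable.snd.comp Computable.fst))
        (Computable.list_cons.comp hd (Computable.const ([] : List Bool)))).to₂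
    exact (h1.map h2).to₂
  have := Partrec.nat_rec (f := fun a : List Bool × ℕ => a.2)
    (g := fun _ : List Bool × ℕ => Part.some ([] : List Bool))
    (h := fun (a : List Bool × ℕ) (p : ℕ × List Bool) =>
      (G a.1 p.1).map fun z => p.2 ++ [decide (z = 1)])
    Computable.snd (Partrec.const' _) step
  refine this.of_eq fun a => ?_
  obtain ⟨σ', k⟩ := a
  induction k with
  | zero => rfl
  | succ k ih => simp only [ebits, ← ih]

/- ### composition of reductions -/

lemma redCompose {A E B : ℕ → Bool} {v u h : ℕ → ℕ} (hv : Computable v)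
    (hAE : RedUse (natOf A) E v) (hEB : RedUse (natOf E) B u)
    (hcond : ∀ n m, m < v n → u m ≤ h n) : SRedUse A B h := by
  obtain ⟨F, hF, hFm, hFv⟩ := hAE
  obtain ⟨G, hG, hGm, hGv⟩ := hEB
  refine ⟨fun σ n => (ebits G σ (v n)).bind fun τ => F τ n, ?_, ?_, ?_⟩
  · have h1 : Partrec fun a : List Bool × ℕ => ebits G a.1 (v a.2) :=
      (ebits_partrec hG).comp (Computable.fst.pair (hv.comp Computable.snd))
    have h2 : Partrec₂ fun (a : List Bool × ℕ) (τ : List Bool) => F τ a.2 :=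
      hF.comp Computable.snd (Computable.snd.comp Computable.fst)
    exact (h1.bind h2).to₂
  · intro σ τ n y hστ hy
    obtain ⟨l, hl, hyF⟩ := Part.mem_bind_iff.mp hy
    exact Part.mem_bind_iff.mpr ⟨l, ebits_mono hGm hστ _ _ hl, hyF⟩
  · intro n
    refine Part.mem_bind_iff.mpr ⟨opre E (v n), ebits_mem _ _ _ (fun m hm => ?_), hFv n⟩
    exact hGm _ _ _ _ (opre_prefix B (hcond n m hm)) (hGv m)

/- ### cumulative max -/

def cmax (u : ℕ → ℕ) : ℕ → ℕ
  | 0 => 0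
  | (k+1) => max (cmax u k) (u k)

lemma cmax_mono (u : ℕ → ℕ) : Monotone (cmax u) := by
  apply monotone_nat_of_le_succ
  intro k; exact le_max_left _ _

lemma le_cmax (u : ℕ → ℕ) {m k : ℕ} (h : m < k) : u m ≤ cmax u k := by
  have : u m ≤ cmax u (m+1) := le_max_right _ _
  exact this.trans (cmax_mono u h)

lemma cmax_computable {u : ℕ → ℕ} (hu : Computable u) : Computable (cmax u) := by
  have := Computable.nat_rec (f := @id ℕ) (g := fun _ : ℕ => 0)
    (h := fun (_ : ℕ) (p : ℕ × ℕ) => max p.2 (u p.1))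
    Computable.id (Computable.const 0)
    ((Primrec₂.to_comp Primrec.nat_max).comp (Computable.snd.comp Computable.snd)
      (hu.comp (Computable.fst.comp Computable.snd))).to₂
  refine this.of_eq fun n => ?_
  induction n with
  | zero => rfl
  | succ k ih => simp only [cmax, ← ih]; rfl

/- ### the order function for part 1 -/

def vfn (u : ℕ → ℕ) (n : ℕ) : ℕ := max n (cmax u (n+1))

lemma vfn_self_le (u : ℕ → ℕ) (n : ℕ) : n ≤ vfn u n := le_max_left _ _

lemma vfn_use_le (u : ℕ → ℕ) (n : ℕ) : u n ≤ vfn u n :=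
  (le_cmax u (Nat.lt_succ_self n)).trans (le_max_right _ _)

lemma vfn_mono (u : ℕ → ℕ) : Monotone (vfn u) := by
  intro a b hab
  exact max_le_max hab (cmax_mono u (Nat.succ_le_succ hab))

lemma vfn_computable {u : ℕ → ℕ} (hu : Computable u) : Computable (vfn u) :=
  (Primrec₂.to_comp Primrec.nat_max).comp Computable.id
    ((cmax_computable hu).comp (Computable.succ))

def foldMin (q : ℕ → ℕ) : ℕ → ℕ
  | 0 => q 0
  | (j+1) => min (foldMin q j) (q (j+1))

lemma foldMin_le (q : ℕ → ℕ) : ∀ {j n : ℕ}, n ≤ j → foldMin q j ≤ q n := by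
  intro j
  induction j with
  | zero => intro n hn; rw [Nat.le_zero.mp hn]; exact le_refl _
  | succ j ih =>
    intro n hn
    rcases Nat.lt_succ_iff_lt_or_eq.mp (Nat.lt_succ_of_le hn) with hc | hc
    · exact (min_le_left _ _).trans (ih (Nat.lt_succ_iff.mp hc))
    · rw [hc]; exact min_le_right _ _

lemma le_foldMin (q : ℕ → ℕ) : ∀ {j c : ℕ}, (∀ n, n ≤ j → c ≤ q n) → c ≤ foldMin q j := by
  intro j
  induction j with
  | zero => intro c hc; exact hc 0 (le_refl _)
  | succ j ih =>
    intro c hc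
    exact le_min (ih fun n hn => hc n (hn.trans (Nat.le_succ _))) (hc _ (le_refl _))

def foldBMax (b : ℕ → Bool) : ℕ → ℕ
  | 0 => 0
  | (j+1) => cond (b (j+1)) (max (j+1) (foldBMax b j)) (foldBMax b j)

lemma foldBMax_le (b : ℕ → Bool) : ∀ j, foldBMax b j ≤ j := by
  intro j
  induction j with
  | zero => exact le_refl _
  | succ j ih =>
    cases hb : b (j+1) <;> simp [foldBMax, hb]
    · exact ih.trans (Nat.le_succ _)
    · exact ih.trans (Nat.le_succ _)

lemma le_foldBMax (b : ℕ → Bool) : ∀ {j k : ℕ}, k ≤ j → b k = true → k ≤ foldBMax b j := by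
  intro j
  induction j with
  | zero => intro k hk _; exact hk
  | succ j ih =>
    intro k hk hb
    rcases Nat.lt_succ_iff_lt_or_eq.mp (Nat.lt_succ_of_le hk) with hc | hc
    · have h1 : k ≤ foldBMax b j := ih (Nat.lt_succ_iff.mp hc) hb
      cases hbj : b (j+1) <;> simp [foldBMax, hbj]
      · exact h1
      · exact Or.inr h1
    · subst hc
      simp [foldBMax, hb]

lemma foldBMax_prop (b : ℕ → Bool) : ∀ j, foldBMax b j = 0 ∨ b (foldBMax b j) = true := by
  intro j
  induction j with
  | zero => exact Or.inl rfl
  | succ j ih =>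
    cases hb : b (j+1)
    · simpa [foldBMax, hb] using ih
    · right
      have : max (j+1) (foldBMax b j) = j+1 :=
        max_eq_left ((foldBMax_le b j).trans (Nat.le_succ _))
      simp [foldBMax, hb, this]

lemma foldMin_eq_rec (q : ℕ → ℕ) : ∀ j, Nat.rec (motive := fun _ => ℕ) (q 0)
    (fun y IH => min IH (q (y+1))) j = foldMin q j := by
  intro j
  induction j with
  | zero => rfl
  | succ j ih => simp only [foldMin, ← ih]

lemma foldBMax_eq_rec (b : ℕ → Bool) : ∀ j, Nat.rec (motive := fun _ => ℕ) 0
    (fun y IH => cond (b (y+1)) (max (y+1) IH) IH) j = foldBMax b j := by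
  intro j
  induction j with
  | zero => rfl
  | succ j ih => simp only [foldBMax, ← ih]

def qfn (v h : ℕ → ℕ) (m n : ℕ) : ℕ := if m ≤ v n then h n else h m

def hp1 (v h : ℕ → ℕ) (m : ℕ) : ℕ := foldMin (qfn v h m) m

lemma qfn_computable {v h : ℕ → ℕ} (hv : Computable v) (hh : Computable h) :
    Computable₂ (qfn v h) := by
  have hc : Computable fun p : ℕ × ℕ => decide (p.1 ≤ v p.2) :=
    (Primrec₂.to_comp Primrec.nat_le.decide).comp Computable.fst (hv.comp Computable.snd)
  have := Computable.cond (c := fun p : ℕ × ℕ => decide (p.1 ≤ v p.2))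
    (f := fun p : ℕ × ℕ => h p.2) (g := fun p : ℕ × ℕ => h p.1)
    hc (hh.comp Computable.snd) (hh.comp Computable.fst)
  refine this.of_eq fun p => ?_
  by_cases hle : p.1 ≤ v p.2 <;> simp [qfn, hle]

lemma hp1_computable {v h : ℕ → ℕ} (hv : Computable v) (hh : Computable h) :
    Computable (hp1 v h) := by
  have := Computable.nat_rec (f := @id ℕ) (g := fun m : ℕ => qfn v h m 0)
    (h := fun (m : ℕ) (p : ℕ × ℕ) => min p.2 (qfn v h m (p.1 + 1)))
    Computable.id ((qfn_computable hv hh).comp Computable.id (Computable.const 0))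
    ((Primrec₂.to_comp Primrec.nat_min).comp (Computable.snd.comp Computable.snd)
      ((qfn_computable hv hh).comp Computable.fst
        (Computable.succ.comp (Computable.fst.comp Computable.snd)))).to₂
  refine this.of_eq fun m => foldMin_eq_rec (qfn v h m) m

lemma hp1_key (v h : ℕ → ℕ) (hvid : ∀ n, n ≤ v n) {m n : ℕ} (h1 : n ≤ m) (h2 : m ≤ v n) :
    hp1 v h m ≤ h n := by
  have := foldMin_le (qfn v h m) h1
  rwa [qfn, if_pos h2] at this

lemma hp1_mono (v h : ℕ → ℕ) (hv : Monotone v) (hvid : ∀ n, n ≤ v n) (hh : Monotone h) :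
    Monotone (hp1 v h) := by
  intro m m' hmm'
  refine le_foldMin _ fun n hn => ?_
  rw [qfn]
  by_cases hc : m' ≤ v n
  · have hm : m ≤ v n := hmm'.trans hc
    rw [if_pos hc]
    by_cases hnm : n ≤ m
    · have := foldMin_le (qfn v h m) hnm
      rwa [qfn, if_pos hm] at this
    · have := foldMin_le (qfn v h m) (le_refl m)
      rw [qfn, if_pos (hvid m)] at this
      exact this.trans (hh (le_of_not_ge hnm))
  · rw [if_neg hc]
    have := foldMin_le (qfn v h m) (le_refl m)
    rw [qfn, if_pos (hvid m)] at this
    exact this.trans (hh hmm')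

lemma hp1_unbounded (v h : ℕ → ℕ) (hv : Monotone v) (hvid : ∀ n, n ≤ v n) (hh : Monotone h)
    (hhu : ∀ M, ∃ n, M ≤ h n) : ∀ M, ∃ m, M ≤ hp1 v h m := by
  intro M
  obtain ⟨n, hn⟩ := hhu M
  cases n with
  | zero =>
    refine ⟨0, ?_⟩
    have : hp1 v h 0 = h 0 := by simp [hp1, foldMin, qfn, if_pos (hvid 0)]
    rw [this]; exact hn
  | succ k =>
    refine ⟨v k + 1, hn.trans (le_foldMin _ fun n' hn' => ?_)⟩
    rw [qfn]
    by_cases hc : v k + 1 ≤ v n'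
    · rw [if_pos hc]
      have hkn' : k + 1 ≤ n' := by
        by_contra hcon
        have : v n' ≤ v k := hv (Nat.lt_succ_iff.mp (Nat.lt_of_not_le hcon))
        omega
      exact hh hkn'
    · rw [if_neg hc]
      exact hh (by have := hvid k; omega)

def hp2 (u h : ℕ → ℕ) (n : ℕ) : ℕ := foldBMax (fun k => decide (cmax u k ≤ h n)) n

lemma hp2_key (u h : ℕ → ℕ) (n : ℕ) : cmax u (hp2 u h n) ≤ h n := by
  rcases foldBMax_prop (fun k => decide (cmax u k ≤ h n)) n with h0 | hb
  · rw [hp2, h0]; exact Nat.zero_le _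
  · exact of_decide_eq_true hb

lemma le_hp2 (u h : ℕ → ℕ) {k n : ℕ} (hk : k ≤ n) (hc : cmax u k ≤ h n) : k ≤ hp2 u h n :=
  le_foldBMax _ hk (decide_eq_true hc)

lemma hp2_mono (u h : ℕ → ℕ) (hh : Monotone h) : Monotone (hp2 u h) := by
  intro n n' hnn'
  exact le_hp2 u h ((foldBMax_le _ n).trans hnn') ((hp2_key u h n).trans (hh hnn'))

lemma hp2_unbounded (u h : ℕ → ℕ) (hh : Monotone h) (hhu : ∀ M, ∃ n, M ≤ h n) :
    ∀ M, ∃ n, M ≤ hp2 u h n := by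
  intro M
  obtain ⟨n₂, hn₂⟩ := hhu (cmax u M)
  refine ⟨max M n₂, le_hp2 u h (le_max_left _ _) (hn₂.trans (hh (le_max_right _ _)))⟩

lemma hp2_computable {u h : ℕ → ℕ} (hu : Computable u) (hh : Computable h) :
    Computable (hp2 u h) := by
  have hc : Computable fun p : ℕ × (ℕ × ℕ) => decide (cmax u (p.2.1 + 1) ≤ h p.1) :=
    (Primrec₂.to_comp Primrec.nat_le.decide).comp
      ((cmax_computable hu).comp (Computable.succ.comp (Computable.fst.comp Computable.snd)))
      (hh.comp Computable.fst)
  have hstep : Computable₂ fun (n : ℕ) (p : ℕ × ℕ) =>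
      cond (decide (cmax u (p.1 + 1) ≤ h n)) (max (p.1 + 1) p.2) p.2 :=
    (Computable.cond hc
      ((Primrec₂.to_comp Primrec.nat_max).comp
        (Computable.succ.comp (Computable.fst.comp Computable.snd))
        (Computable.snd.comp Computable.snd))
      (Computable.snd.comp Computable.snd)).to₂
  have := Computable.nat_rec (f := @id ℕ) (g := fun _ : ℕ => 0)
    (h := fun (n : ℕ) (p : ℕ × ℕ) =>
      cond (decide (cmax u (p.1 + 1) ≤ h n)) (max (p.1 + 1) p.2) p.2)
    Computable.id (Computable.const 0) hstep
  refine this.of_eq fun n => foldBMax_eq_rec (fun k => decide (cmax u k ≤ h n)) n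

theorem stmt6 (A E B : ℕ → Bool) :
    (SWttRed A E → TtuRed E B → TtuRed A B) ∧
      (TtuRed A E → SWttRed E B → TtuRed A B) := by
  constructor
  · rintro ⟨u, hu, hured⟩ hEB h ⟨hhc, hhm, hhu⟩
    have hAv : RedUse (natOf A) E (vfn u) := hured.mono_use (vfn_use_le u)
    have hord : IsOrder (hp1 (vfn u) h) :=
      ⟨hp1_computable (vfn_computable hu) hhc,
       hp1_mono _ _ (vfn_mono u) (vfn_self_le u) hhm,
       hp1_unbounded _ _ (vfn_mono u) (vfn_self_le u) hhm hhu⟩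
    refine redCompose (vfn_computable hu) hAv (hEB _ hord) ?_
    intro n m hm
    calc hp1 (vfn u) h m ≤ hp1 (vfn u) h (vfn u n) :=
          hp1_mono _ _ (vfn_mono u) (vfn_self_le u) hhm (le_of_lt hm)
      _ ≤ h n := hp1_key _ _ (vfn_self_le u) (vfn_self_le u n) (le_refl _)
  · rintro hAE ⟨u, hu, hured⟩ h ⟨hhc, hhm, hhu⟩
    have hord : IsOrder (hp2 u h) :=
      ⟨hp2_computable hu hhc, hp2_mono u h hhm, hp2_unbounded u h hhm hhu⟩
    refine redCompose (hp2_computable hu hhc) (hAE _ hord) hured ?_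
    intro n m hm
    exact (le_cmax u hm).trans (hp2_key u h n)
end

section
/- For a fixed B ∈ 2^ℕ, the class {A : A ≤_{T(tu)} B} is closed downward under ≤_{wtt} and closed under join ⊕ (i.e., it is an ideal in the wtt-degrees). -/
open scoped Classical
open Filter

set_option maxHeartbeats 1000000

namespace Stmt7Aux
open Nat.Partrec (Code)
open Nat.Partrec.Code

lemma opre_prefix (X : ℕ → Bool) {m n : ℕ} (h : m ≤ n) : opre X m <+: opre X n := by
  unfold opre
  have h1 : List.range m = (List.range n).take m := by
    rw [List.take_range, Nat.min_eq_left h]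
  rw [h1, List.map_take]
  exact List.take_prefix _ _

lemma decide_natOf (A : ℕ → Bool) (k : ℕ) : decide (natOf A k = 1) = A k := by
  cases hA : A k <;> simp [natOf, hA]

lemma opre_eq_map (A : ℕ → Bool) (m : ℕ) :
    (List.range m).map (fun k => decide (natOf A k = 1)) = opre A m := by
  unfold opre
  apply List.map_congr_left
  intro k _
  exact decide_natOf A k

/-- Extract a code from a binary partial recursive functional. -/
lemma code_of_partrec2 {F : List Bool → ℕ →. ℕ} (hF : Partrec₂ F) :
    ∃ c : Code, ∀ (σ : List Bool) (k y : ℕ),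
      y ∈ eval c (Encodable.encode (σ, k)) ↔ y ∈ F σ k := by
  obtain ⟨c, hc⟩ := exists_code.1 hF
  refine ⟨c, fun σ k y => ?_⟩
  rw [hc]
  simp [Encodable.encodek]

lemma exists_stage (c : Code) (q y : ℕ → ℕ) :
    ∀ m : ℕ, (∀ k < m, y k ∈ eval c (q k)) → ∃ s, ∀ k < m, y k ∈ evaln s c (q k) := by
  intro m
  induction m with
  | zero => exact fun _ => ⟨0, fun k hk => absurd hk (Nat.not_lt_zero k)⟩
  | succ m ih =>
    intro h
    obtain ⟨s₀, hs₀⟩ := ih fun k hk => h k (hk.trans (Nat.lt_succ_self m))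
    obtain ⟨s₁, hs₁⟩ := evaln_complete.1 (h m (Nat.lt_succ_self m))
    refine ⟨max s₀ s₁, fun k hk => ?_⟩
    rcases Nat.lt_succ_iff_lt_or_eq.1 hk with hk' | rfl
    · exact evaln_mono (le_max_left _ _) (hs₀ k hk')
    · exact evaln_mono (le_max_right _ _) hs₁

/-- A strictly increasing computable majorant of a computable function. -/
def padF (u : ℕ → ℕ) : ℕ → ℕ := fun n =>
  Nat.rec (u 0 + 1) (fun j ih => max (ih + 1) (u (j + 1) + j + 2)) n

lemma padF_succ (u : ℕ → ℕ) (n : ℕ) :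
    padF u (n + 1) = max (padF u n + 1) (u (n + 1) + n + 2) := rfl

lemma padF_lt_succ (u : ℕ → ℕ) (n : ℕ) : padF u n < padF u (n + 1) := by
  rw [padF_succ]; exact lt_of_lt_of_le (Nat.lt_succ_self _) (le_max_left _ _)

lemma lt_padF (u : ℕ → ℕ) (n : ℕ) : n < padF u n := by
  induction n with
  | zero => exact Nat.succ_pos _
  | succ n ih => exact lt_of_le_of_lt (Nat.succ_le_of_lt ih) (padF_lt_succ u n)

lemma le_padF (u : ℕ → ℕ) (n : ℕ) : u n ≤ padF u n := by
  cases n with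
  | zero => exact Nat.le_succ _
  | succ n =>
    rw [padF_succ]
    refine le_trans ?_ (le_max_right _ _)
    omega

lemma padF_computable {u : ℕ → ℕ} (hu : Computable u) : Computable (padF u) := by
  have : Computable fun (p : ℕ × (ℕ × ℕ)) => max (p.2.2 + 1) (u (p.2.1 + 1) + p.2.1 + 2) := by
    apply Primrec.nat_max.to_comp.comp
    · exact Computable.succ.comp (Computable.snd.comp Computable.snd)
    · apply Primrec.nat_add.to_comp.comp
      · apply Primrec.nat_add.to_comp.comp
        · exact hu.comp (Computable.succ.comp (Computable.fst.comp Computable.snd))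
        · exact Computable.fst.comp Computable.snd
      · exact Computable.const 2
  exact Computable.nat_rec Computable.id (Computable.const (u 0 + 1)) this.to₂

/-- A computable "inverse" of a function `v` with `v n < v (n+1)` and `n < v n`:
`linv v k` is the least `n` with `k < v n`. -/
def linv (v : ℕ → ℕ) : ℕ → ℕ := fun k =>
  Nat.rec 0 (fun j ih => if j + 1 < v ih then ih else ih + 1) k

lemma linv_succ (v : ℕ → ℕ) (k : ℕ) :
    linv v (k + 1) = if k + 1 < v (linv v k) then linv v k else linv v k + 1 := rfl

section linv

variable {v : ℕ → ℕ}

lemma linv_spec (hv1 : ∀ n, v n < v (n + 1)) (hv2 : ∀ n, n < v n) :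
    ∀ k, k < v (linv v k) ∧ (linv v k = 0 ∨ v (linv v k - 1) ≤ k) := by
  intro k
  induction k with
  | zero => exact ⟨hv2 0, Or.inl rfl⟩
  | succ k ih =>
    obtain ⟨h1, h2⟩ := ih
    rw [linv_succ]
    by_cases hc : k + 1 < v (linv v k)
    · simp only [if_pos hc]
      exact ⟨hc, h2.imp id fun h => h.trans (Nat.le_succ k)⟩
    · simp only [if_neg hc]
      have hle : v (linv v k) ≤ k + 1 := Nat.le_of_not_lt hc
      have heq : v (linv v k) = k + 1 := le_antisymm hle h1
      constructor
      · calc k + 1 = v (linv v k) := heq.symm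
          _ < v (linv v k + 1) := hv1 _
      · right; simpa using heq.le

lemma linv_le (hv1 : ∀ n, v n < v (n + 1)) (hv2 : ∀ n, n < v n) {k n : ℕ}
    (h : k < v n) : linv v k ≤ n := by
  obtain ⟨h1, h2⟩ := linv_spec hv1 hv2 k
  rcases h2 with h0 | h2
  · omega
  · by_contra hn
    push_neg at hn
    have : v n ≤ v (linv v k - 1) :=
      (strictMono_nat_of_lt_succ hv1).monotone (by omega)
    omega

lemma linv_mono : Monotone (linv v) := by
  apply monotone_nat_of_le_succ
  intro k
  rw [linv_succ]
  split <;> omega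

lemma linv_big (hv1 : ∀ n, v n < v (n + 1)) (hv2 : ∀ n, n < v n) (n : ℕ) :
    n < linv v (v n) := by
  have h1 := (linv_spec hv1 hv2 (v n)).1
  by_contra hn
  push_neg at hn
  exact absurd ((strictMono_nat_of_lt_succ hv1).monotone hn) (by omega)

lemma linv_computable (hvc : Computable v) : Computable (linv v) := by
  have : Computable fun (p : ℕ × (ℕ × ℕ)) =>
      cond (decide (p.2.1 + 1 < v p.2.2)) p.2.2 (p.2.2 + 1) := by
    apply Computable.cond
    · have h : PrimrecRel ((· < ·) : ℕ → ℕ → Prop) := Primrec.nat_lt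
      exact (h.decide.to_comp).comp
        (Computable.succ.comp (Computable.fst.comp Computable.snd))
        (hvc.comp (Computable.snd.comp Computable.snd))
    · exact Computable.snd.comp Computable.snd
    · exact Computable.succ.comp (Computable.snd.comp Computable.snd)
  have h := Computable.nat_rec Computable.id (Computable.const 0) this.to₂
  apply h.of_eq
  intro k
  induction k with
  | zero => rfl
  | succ k ih =>
    show cond (decide (k + 1 < v (Nat.rec 0 _ k))) (Nat.rec 0 _ k) (Nat.rec 0 _ k + 1) = _
    rw [show (Nat.rec 0 (fun y IH => bif decide (y + 1 < v IH) then IH else IH + 1) k : ℕ)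
        = linv v k from ih, linv_succ]
    by_cases hc : k + 1 < v (linv v k) <;> simp [hc]

end linv

/-- One stage of the composed reduction. -/
def Gfun (c c' : Code) (a : (ℕ × List Bool) × ℕ) (s : ℕ) : Option ℕ :=
  cond ((List.range a.1.1).foldl
      (fun b k => b && (evaln s c (Encodable.encode (a.1.2, k))).isSome) true)
    (evaln s c' (Encodable.encode
      ((List.range a.1.1).map
        (fun k => decide (evaln s c (Encodable.encode (a.1.2, k)) = some 1)), a.2)))
    none

lemma foldl_band (f : ℕ → Bool) :
    ∀ (l : List ℕ) (b : Bool), l.foldl (fun b k => b && f k) b = (b && l.all f) := by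
  intro l
  induction l with
  | nil => simp
  | cons x l ih => intro b; simp [ih, Bool.and_assoc]

lemma Gfun_primrec (c c' : Code) : Primrec₂ (Gfun c c') := by
  have hm : Primrec fun q : ((ℕ × List Bool) × ℕ) × ℕ => q.1.1.1 :=
    Primrec.fst.comp (Primrec.fst.comp Primrec.fst)
  have hσ : Primrec fun q : ((ℕ × List Bool) × ℕ) × ℕ => q.1.1.2 :=
    Primrec.snd.comp (Primrec.fst.comp Primrec.fst)
  have hn : Primrec fun q : ((ℕ × List Bool) × ℕ) × ℕ => q.1.2 :=
    Primrec.snd.comp Primrec.fst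
  have hs : Primrec fun q : ((ℕ × List Bool) × ℕ) × ℕ => q.2 := Primrec.snd
  have hrange : Primrec fun q : ((ℕ × List Bool) × ℕ) × ℕ => List.range q.1.1.1 :=
    Primrec.list_range.comp hm
  have hev : Primrec fun p : (((ℕ × List Bool) × ℕ) × ℕ) × ℕ =>
      evaln p.1.2 c (Encodable.encode (p.1.1.1.2, p.2)) := by
    exact primrec_evaln.comp (((hs.comp Primrec.fst).pair (Primrec.const c)).pair
      (Primrec.encode.comp ((hσ.comp Primrec.fst).pair Primrec.snd)))
  have hguard : Primrec fun q : ((ℕ × List Bool) × ℕ) × ℕ =>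
      (List.range q.1.1.1).foldl
        (fun b k => b && (evaln q.2 c (Encodable.encode (q.1.1.2, k))).isSome) true := by
    refine Primrec.list_foldl (h := fun q p =>
        p.1 && (evaln q.2 c (Encodable.encode (q.1.1.2, p.2))).isSome)
      hrange (Primrec.const true) ?_
    exact (Primrec.and.comp (Primrec.fst.comp Primrec.snd)
      (Primrec.option_isSome.comp (primrec_evaln.comp
        (((hs.comp Primrec.fst).pair (Primrec.const c)).pair
          (Primrec.encode.comp ((hσ.comp Primrec.fst).pair
            (Primrec.snd.comp Primrec.snd))))))).to₂
  have hbools : Primrec fun q : ((ℕ × List Bool) × ℕ) × ℕ =>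
      (List.range q.1.1.1).map
        (fun k => decide (evaln q.2 c (Encodable.encode (q.1.1.2, k)) = some 1)) := by
    exact Primrec.list_map hrange (Primrec.eq.comp hev (Primrec.const (some 1))).decide.to₂
  have hfinal : Primrec fun q : ((ℕ × List Bool) × ℕ) × ℕ =>
      evaln q.2 c' (Encodable.encode
        ((List.range q.1.1.1).map
          (fun k => decide (evaln q.2 c (Encodable.encode (q.1.1.2, k)) = some 1)), q.1.2)) := by
    exact primrec_evaln.comp ((hs.pair (Primrec.const c')).pair
      (Primrec.encode.comp (hbools.pair hn)))
  exact (Primrec.cond hguard hfinal (Primrec.const none)).to₂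

lemma Gfun_guard {c c' : Code} {m : ℕ} {σ : List Bool} {n s y : ℕ}
    (h : Gfun c c' ((m, σ), n) s = some y) :
    (∀ k < m, (evaln s c (Encodable.encode (σ, k))).isSome = true) ∧
      evaln s c' (Encodable.encode
        ((List.range m).map
          (fun k => decide (evaln s c (Encodable.encode (σ, k)) = some 1)), n)) = some y := by
  unfold Gfun at h
  dsimp only at h
  rcases hg : (List.range m).foldl
      (fun b k => b && (evaln s c (Encodable.encode (σ, k))).isSome) true with _ | _
  · rw [hg] at h; exact absurd h (by simp)
  · rw [hg] at h
    rw [foldl_band] at hg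
    simp only [Bool.true_and, List.all_eq_true, List.mem_range] at hg
    exact ⟨hg, h⟩

lemma Gfun_eval {c c' : Code} {m : ℕ} {σ : List Bool} {n s y : ℕ} {av : ℕ → ℕ}
    (h1 : ∀ k < m, evaln s c (Encodable.encode (σ, k)) = some (av k))
    (h2 : evaln s c' (Encodable.encode
      ((List.range m).map (fun k => decide (av k = 1)), n)) = some y) :
    Gfun c c' ((m, σ), n) s = some y := by
  unfold Gfun
  dsimp only
  rw [foldl_band]
  have hall : (List.range m).all
      (fun k => (evaln s c (Encodable.encode (σ, k))).isSome) = true := by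
    simp only [List.all_eq_true, List.mem_range]
    intro k hk; rw [h1 k hk]; rfl
  rw [hall]
  have hlist : (List.range m).map
        (fun k => decide (evaln s c (Encodable.encode (σ, k)) = some 1))
      = (List.range m).map (fun k => decide (av k = 1)) := by
    apply List.map_congr_left
    intro k hk
    rw [h1 k (List.mem_range.1 hk)]
    simp
  simp only [Bool.true_and, cond_true]
  rw [hlist]
  exact h2

lemma Gfun_eval_inv {c c' : Code} {m : ℕ} {σ : List Bool} {n s y : ℕ}
    (h : Gfun c c' ((m, σ), n) s = some y) :
    ∃ av : ℕ → ℕ, (∀ k < m, evaln s c (Encodable.encode (σ, k)) = some (av k)) ∧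
      evaln s c' (Encodable.encode
        ((List.range m).map (fun k => decide (av k = 1)), n)) = some y := by
  obtain ⟨hg, hf⟩ := Gfun_guard h
  set av : ℕ → ℕ := fun k => (evaln s c (Encodable.encode (σ, k))).getD 0 with hav
  have h1 : ∀ k < m, evaln s c (Encodable.encode (σ, k)) = some (av k) := by
    intro k hk
    obtain ⟨x, hx⟩ := Option.isSome_iff_exists.1 (hg k hk)
    rw [hx, hav]
    simp only [hx, Option.getD_some]
  refine ⟨av, h1, ?_⟩
  have hlist : (List.range m).map (fun k => decide (av k = 1))
      = (List.range m).map
        (fun k => decide (evaln s c (Encodable.encode (σ, k)) = some 1)) := by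
    apply List.map_congr_left
    intro k hk
    rw [h1 k (List.mem_range.1 hk)]
    simp
  rw [hlist]
  exact hf

lemma Gfun_mono {c c' : Code} {a : (ℕ × List Bool) × ℕ} {s s' : ℕ} (hss : s ≤ s') {y : ℕ}
    (h : Gfun c c' a s = some y) : Gfun c c' a s' = some y := by
  obtain ⟨⟨m, σ⟩, n⟩ := a
  obtain ⟨av, h1, h2⟩ := Gfun_eval_inv h
  refine Gfun_eval (av := av) (fun k hk => ?_) (evaln_mono hss h2)
  exact evaln_mono hss (h1 k hk)

/-- Downward closure of tiny-use reducibility under wtt. -/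
lemma ttu_of_wtt {A A' B : ℕ → Bool} (hA : TtuRed A B) (hred : SWttRed A' A) :
    TtuRed A' B := by
  obtain ⟨u, hu, F', hF'p, hF'm, hF'c⟩ := hred
  intro h hh
  obtain ⟨hhc, hhm, hhu⟩ := hh
  set v : ℕ → ℕ := padF u with hvdef
  have hv1 : ∀ n, v n < v (n + 1) := padF_lt_succ u
  have hv2 : ∀ n, n < v n := lt_padF u
  have hvu : ∀ n, u n ≤ v n := le_padF u
  have hvc : Computable v := padF_computable hu
  set g : ℕ → ℕ := fun k => h (linv v k) with hgdef
  have hgord : IsOrder g :=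
    ⟨hhc.comp (linv_computable hvc), hhm.comp linv_mono, fun m => by
      obtain ⟨n₀, hn₀⟩ := hhu m
      exact ⟨v n₀, hn₀.trans (hhm (le_of_lt (linv_big hv1 hv2 n₀)))⟩⟩
  obtain ⟨F, hFp, hFm, hFc⟩ := hA g hgord
  obtain ⟨c, hc⟩ := code_of_partrec2 hFp
  obtain ⟨c', hc'⟩ := code_of_partrec2 hF'p
  have hGm : ∀ {σ : List Bool} {n : ℕ} {a s s' : ℕ}, s ≤ s' →
      a ∈ Gfun c c' ((v n, σ), n) s → a ∈ Gfun c c' ((v n, σ), n) s' := by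
    intro σ n a s s' hss ha
    exact Option.mem_def.2 (Gfun_mono hss (Option.mem_def.1 ha))
  refine ⟨fun σ n => Nat.rfindOpt (fun s => Gfun c c' ((v n, σ), n) s), ?_, ?_, ?_⟩
  · -- partial recursiveness
    have hcomp : Computable₂ fun (p : List Bool × ℕ) (s : ℕ) =>
        Gfun c c' ((v p.2, p.1), p.2) s :=
      (Gfun_primrec c c').to_comp.comp
        ((((hvc.comp (Computable.snd.comp Computable.fst)).pair
          (Computable.fst.comp Computable.fst)).pair
          (Computable.snd.comp Computable.fst)))
        Computable.snd
    exact Partrec.rfindOpt hcomp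
  · -- monotonicity
    intro σ τ n y hpre hy
    obtain ⟨s, hs⟩ := (Nat.rfindOpt_mono fun {_ _ _} => hGm).1 hy
    obtain ⟨av, h1, h2⟩ := Gfun_eval_inv (Option.mem_def.1 hs)
    have hevτ : ∀ k < v n, av k ∈ eval c (Encodable.encode (τ, k)) := by
      intro k hk
      refine (hc τ k _).2 (hFm σ τ k _ hpre ((hc σ k _).1 ?_))
      exact evaln_sound (Option.mem_def.2 (h1 k hk))
    obtain ⟨t₀, ht₀⟩ :=
      exists_stage c (fun k => Encodable.encode (τ, k)) av (v n) hevτ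
    obtain ⟨t₁, ht₁⟩ := evaln_complete.1 (evaln_sound (Option.mem_def.2 h2))
    refine (Nat.rfindOpt_mono fun {_ _ _} => hGm).2 ⟨max t₀ t₁, Option.mem_def.2 ?_⟩
    refine Gfun_eval (av := av) (fun k hk => ?_) (evaln_mono (le_max_right _ _) ht₁)
    exact evaln_mono (le_max_left _ _) (Option.mem_def.1 (ht₀ k hk))
  · -- correctness
    intro n
    have h1 : ∀ k < v n, natOf A k ∈ eval c (Encodable.encode (opre B (h n), k)) := by
      intro k hk
      have hgk : g k ≤ h n := hhm (linv_le hv1 hv2 hk)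
      exact (hc _ k _).2 (hFm _ _ k _ (opre_prefix B hgk) (hFc k))
    obtain ⟨s₀, hs₀⟩ :=
      exists_stage c (fun k => Encodable.encode (opre B (h n), k)) (natOf A) (v n) h1
    have h2 : natOf A' n ∈ eval c' (Encodable.encode (opre A (v n), n)) :=
      (hc' _ n _).2 (hF'm _ _ n _ (opre_prefix A (hvu n)) (hF'c n))
    obtain ⟨s₁, hs₁⟩ := evaln_complete.1 h2
    refine (Nat.rfindOpt_mono fun {_ _ _} => hGm).2 ⟨max s₀ s₁, Option.mem_def.2 ?_⟩
    refine Gfun_eval (av := natOf A) (fun k hk => ?_) ?_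
    · exact evaln_mono (le_max_left _ _) (Option.mem_def.1 (hs₀ k hk))
    · rw [opre_eq_map]
      exact evaln_mono (le_max_right _ _) (Option.mem_def.1 hs₁)

/-- One stage of the join reduction. -/
def Jfun (c₁ c₂ : Code) (a : List Bool × ℕ) (s : ℕ) : Option ℕ :=
  cond (a.2 % 2 == 0) (evaln s c₁ (Encodable.encode (a.1, a.2 / 2)))
    (evaln s c₂ (Encodable.encode (a.1, a.2 / 2)))

lemma Jfun_primrec (c₁ c₂ : Code) : Primrec₂ (Jfun c₁ c₂) := by
  have hσ : Primrec fun q : (List Bool × ℕ) × ℕ => q.1.1 :=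
    Primrec.fst.comp Primrec.fst
  have hn : Primrec fun q : (List Bool × ℕ) × ℕ => q.1.2 :=
    Primrec.snd.comp Primrec.fst
  have hs : Primrec fun q : (List Bool × ℕ) × ℕ => q.2 := Primrec.snd
  have hc : Primrec fun q : (List Bool × ℕ) × ℕ => (q.1.2 % 2 == 0) :=
    Primrec.beq.comp (Primrec.nat_mod.comp hn (Primrec.const 2)) (Primrec.const 0)
  have harg : Primrec fun q : (List Bool × ℕ) × ℕ =>
      Encodable.encode (q.1.1, q.1.2 / 2) :=
    Primrec.encode.comp (hσ.pair (Primrec.nat_div.comp hn (Primrec.const 2)))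
  exact (Primrec.cond hc
    (primrec_evaln.comp ((hs.pair (Primrec.const c₁)).pair harg))
    (primrec_evaln.comp ((hs.pair (Primrec.const c₂)).pair harg))).to₂

lemma Jfun_mono {c₁ c₂ : Code} {a : List Bool × ℕ} {s s' : ℕ} (hss : s ≤ s') {y : ℕ}
    (h : Jfun c₁ c₂ a s = some y) : Jfun c₁ c₂ a s' = some y := by
  unfold Jfun at h ⊢
  rcases hb : (a.2 % 2 == 0) with _ | _ <;> rw [hb] at h <;> simp only [cond_false, cond_true] <;>
    exact evaln_mono hss h

/-- Closure of tiny-use reducibility under join. -/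
lemma ttu_join {A₁ A₂ B : ℕ → Bool} (h₁ : TtuRed A₁ B) (h₂ : TtuRed A₂ B) :
    TtuRed (join A₁ A₂) B := by
  intro h hh
  obtain ⟨hhc, hhm, hhu⟩ := hh
  have hord₁ : IsOrder (fun k => h (2 * k)) :=
    ⟨hhc.comp (Primrec.nat_mul.to_comp.comp (Computable.const 2) Computable.id),
      fun a b hab => hhm (by omega),
      fun m => by obtain ⟨n₀, hn₀⟩ := hhu m; exact ⟨n₀, hn₀.trans (hhm (by omega))⟩⟩
  have hord₂ : IsOrder (fun k => h (2 * k + 1)) :=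
    ⟨hhc.comp (Primrec.succ.to_comp.comp
        (Primrec.nat_mul.to_comp.comp (Computable.const 2) Computable.id)),
      fun a b hab => hhm (by omega),
      fun m => by obtain ⟨n₀, hn₀⟩ := hhu m; exact ⟨n₀, hn₀.trans (hhm (by omega))⟩⟩
  obtain ⟨F₁, hF₁p, hF₁m, hF₁c⟩ := h₁ _ hord₁
  obtain ⟨F₂, hF₂p, hF₂m, hF₂c⟩ := h₂ _ hord₂
  obtain ⟨c₁, hc₁⟩ := code_of_partrec2 hF₁p
  obtain ⟨c₂, hc₂⟩ := code_of_partrec2 hF₂p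
  have hJm : ∀ {σ : List Bool} {n : ℕ} {a s s' : ℕ}, s ≤ s' →
      a ∈ Jfun c₁ c₂ (σ, n) s → a ∈ Jfun c₁ c₂ (σ, n) s' := by
    intro σ n a s s' hss ha
    exact Option.mem_def.2 (Jfun_mono hss (Option.mem_def.1 ha))
  refine ⟨fun σ n => Nat.rfindOpt (fun s => Jfun c₁ c₂ (σ, n) s), ?_, ?_, ?_⟩
  · exact Partrec.rfindOpt (Jfun_primrec c₁ c₂).to_comp
  · -- monotonicity
    intro σ τ n y hpre hy
    obtain ⟨s, hs⟩ := (Nat.rfindOpt_mono fun {_ _ _} => hJm).1 hy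
    rw [Option.mem_def] at hs
    unfold Jfun at hs
    refine (Nat.rfindOpt_mono fun {_ _ _} => hJm).2 ?_
    rcases hb : (n % 2 == 0) with _ | _ <;> rw [show ((σ, n) : List Bool × ℕ).2 = n from rfl, hb] at hs
    · have : y ∈ F₂ τ (n / 2) :=
        hF₂m σ τ _ _ hpre ((hc₂ σ _ _).1 (evaln_sound hs))
      obtain ⟨t, ht⟩ := evaln_complete.1 ((hc₂ τ _ _).2 this)
      refine ⟨t, Option.mem_def.2 ?_⟩
      unfold Jfun
      rw [show ((τ, n) : List Bool × ℕ).2 = n from rfl, hb]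
      exact ht
    · have : y ∈ F₁ τ (n / 2) :=
        hF₁m σ τ _ _ hpre ((hc₁ σ _ _).1 (evaln_sound hs))
      obtain ⟨t, ht⟩ := evaln_complete.1 ((hc₁ τ _ _).2 this)
      refine ⟨t, Option.mem_def.2 ?_⟩
      unfold Jfun
      rw [show ((τ, n) : List Bool × ℕ).2 = n from rfl, hb]
      exact ht
  · -- correctness
    intro n
    refine (Nat.rfindOpt_mono fun {_ _ _} => hJm).2 ?_
    by_cases hpar : n % 2 = 0
    · have hjn : natOf (join A₁ A₂) n = natOf A₁ (n / 2) := by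
        unfold natOf _root_.join; rw [if_pos hpar]
      have h2n : 2 * (n / 2) = n := by omega
      have : natOf A₁ (n / 2) ∈ F₁ (opre B (h n)) (n / 2) := by
        simpa only [h2n] using hF₁c (n / 2)
      obtain ⟨t, ht⟩ := evaln_complete.1 ((hc₁ _ _ _).2 this)
      refine ⟨t, Option.mem_def.2 ?_⟩
      unfold Jfun
      rw [show ((opre B (h n), n) : List Bool × ℕ).2 = n from rfl]
      rw [show (n % 2 == 0) = true by simpa using hpar]
      rw [hjn]
      exact ht
    · have hjn : natOf (join A₁ A₂) n = natOf A₂ (n / 2) := by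
        unfold natOf _root_.join; rw [if_neg hpar]
      have h2n : 2 * (n / 2) + 1 = n := by omega
      have : natOf A₂ (n / 2) ∈ F₂ (opre B (h n)) (n / 2) := by
        simpa only [h2n] using hF₂c (n / 2)
      obtain ⟨t, ht⟩ := evaln_complete.1 ((hc₂ _ _ _).2 this)
      refine ⟨t, Option.mem_def.2 ?_⟩
      unfold Jfun
      rw [show ((opre B (h n), n) : List Bool × ℕ).2 = n from rfl]
      rw [show (n % 2 == 0) = false by simpa using hpar]
      rw [hjn]
      exact ht

end Stmt7Aux

theorem stmt7 (B : ℕ → Bool) :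
    (∀ A A' : ℕ → Bool, TtuRed A B → SWttRed A' A → TtuRed A' B) ∧
      (∀ A₁ A₂ : ℕ → Bool, TtuRed A₁ B → TtuRed A₂ B → TtuRed (join A₁ A₂) B) :=
  ⟨fun _ _ hA hred => Stmt7Aux.ttu_of_wtt hA hred,
    fun _ _ h₁ h₂ => Stmt7Aux.ttu_join h₁ h₂⟩
end

section
/- A set A is anti-complex if and only if for every function f ≤_{wtt} A (f : ℕ → ℕ), C(f(n)) ≤⁺ n. -/
open scoped Classical
open Filter

section Stmt9Aux

variable {U : List Bool →. List Bool} {A : ℕ → Bool}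

/-! ### Bits machinery -/

lemma st9_bits_eq {n : ℕ} (h : n ≠ 0) :
    Nat.bits n = Nat.bodd n :: Nat.bits (Nat.div2 n) := by
  conv_lhs => rw [← Nat.bit_bodd_div2 n]
  rw [Nat.bits_append_bit]
  intro h2
  cases hb : Nat.bodd n
  · exact absurd (by rw [← Nat.bit_bodd_div2 n, hb, h2]; rfl) h
  · rfl

lemma st9_computable_bits : Computable Nat.bits := by
  have hgp : Primrec fun l : List (List Bool) =>
      (if l.length = 0 then ([] : List Bool)
        else Nat.bodd l.length :: l.getD (Nat.div2 l.length) []) := by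
    refine Primrec.ite (Primrec.eq.comp Primrec.list_length (Primrec.const 0))
      (Primrec.const []) ?_
    exact Primrec.list_cons.comp (Primrec.nat_bodd.comp Primrec.list_length)
      ((Primrec.list_getD []).comp Primrec.id (Primrec.nat_div2.comp Primrec.list_length))
  have h2 : Computable₂ (fun (_ : Unit) (n : ℕ) => Nat.bits n) := by
    refine Computable.nat_strong_rec _
      (g := fun (_ : Unit) (l : List (List Bool)) =>
        some (if l.length = 0 then ([] : List Bool)
          else Nat.bodd l.length :: l.getD (Nat.div2 l.length) []))
      ((Primrec.option_some.comp hgp).comp Primrec.snd).to_comp ?_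
    intro _ n
    cases n with
    | zero => simp [Nat.zero_bits]
    | succ n =>
      have hi : Nat.div2 (n + 1) < n + 1 := by
        rw [Nat.div2_val]; exact Nat.div_lt_self n.succ_pos one_lt_two
      simp only [List.length_map, List.length_range, Nat.succ_ne_zero, if_false,
        Option.some.injEq]
      rw [List.getD_eq_getElem _ _ (by simpa using hi)]
      simp only [List.getElem_map, List.getElem_range]
      exact (st9_bits_eq (Nat.succ_ne_zero n)).symm
  exact h2.comp (Computable.const ()) Computable.id

def st9_ofBits (l : List Bool) : ℕ := l.foldr Nat.bit 0

lemma st9_ofBits_bits : ∀ n, st9_ofBits (Nat.bits n) = n := by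
  intro n
  induction n using Nat.strong_induction_on with
  | _ n IH =>
    rcases eq_or_ne n 0 with rfl | h
    · simp [st9_ofBits, Nat.zero_bits]
    · rw [st9_bits_eq h]
      have h1 : st9_ofBits (Nat.bodd n :: Nat.bits (Nat.div2 n)) =
          Nat.bit (Nat.bodd n) (st9_ofBits (Nat.bits (Nat.div2 n))) := rfl
      have hlt : Nat.div2 n < n := by
        rw [Nat.div2_val]; exact Nat.div_lt_self (Nat.pos_of_ne_zero h) one_lt_two
      rw [h1, IH _ hlt, Nat.bit_bodd_div2]

lemma st9_computable_ofBits : Computable st9_ofBits := by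
  have h : Primrec st9_ofBits := by
    have hb : Primrec fun x : List Bool × (Bool × ℕ) => Nat.bit x.2.1 x.2.2 := by
      have := Primrec.cond (Primrec.fst.comp (Primrec.snd (α := List Bool) (β := Bool × ℕ)))
        (Primrec.succ.comp (Primrec.nat_mul.comp (Primrec.const 2)
          (Primrec.snd.comp Primrec.snd)))
        (Primrec.nat_mul.comp (Primrec.const 2) (Primrec.snd.comp Primrec.snd))
      refine this.of_eq fun x => ?_
      cases hx : x.2.1 <;> simp [Nat.bit, hx]
    exact (Primrec.list_foldr Primrec.id (Primrec.const 0) hb.to₂).of_eq fun l => rfl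
  exact h.to_comp

/-! ### strToNat machinery -/

lemma st9_le_foldl : ∀ (l : List Bool) (a : ℕ),
    a ≤ l.foldl (fun a b => 2 * a + cond b 1 0) a := by
  intro l
  induction l with
  | nil => exact fun a => le_refl a
  | cons b t IH =>
    intro a
    simp only [List.foldl_cons]
    refine le_trans ?_ (IH (2 * a + cond b 1 0))
    cases b <;> simp <;> omega

lemma st9_bits_foldl (l : List Bool) :
    Nat.bits (l.foldl (fun a b => 2 * a + cond b 1 0) 1) = l.reverse ++ [true] := by
  induction l using List.reverseRecOn with
  | nil => simpa using Nat.one_bits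
  | append_singleton t b IH =>
    rw [List.foldl_append]
    simp only [List.foldl_cons, List.foldl_nil]
    have hv : t.foldl (fun a b => 2 * a + cond b 1 0) 1 ≠ 0 := by
      have := st9_le_foldl t 1; omega
    have hb : 2 * (t.foldl (fun a b => 2 * a + cond b 1 0) 1) + cond b 1 0 =
        Nat.bit b (t.foldl (fun a b => 2 * a + cond b 1 0) 1) := by
      cases b <;> simp [Nat.bit]
    rw [hb, Nat.bits_append_bit _ _ (fun h => absurd h hv), IH]
    simp

lemma st9_strToNat_add_one (l : List Bool) :
    strToNat l + 1 = l.foldl (fun a b => 2 * a + cond b 1 0) 1 :=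
  Nat.sub_add_cancel (st9_le_foldl l 1)

lemma st9_computable_strToNat : Computable strToNat := by
  have h1 : Primrec fun l : List Bool => l.foldl (fun a b => 2 * a + cond b 1 0) 1 := by
    have h2 : Primrec fun x : List Bool × (ℕ × Bool) =>
        2 * x.2.1 + cond x.2.2 1 0 :=
      Primrec.nat_add.comp
        (Primrec.nat_mul.comp (Primrec.const 2) (Primrec.fst.comp Primrec.snd))
        (Primrec.cond (Primrec.snd.comp Primrec.snd) (Primrec.const 1) (Primrec.const 0))
    exact (Primrec.list_foldl Primrec.id (Primrec.const 1) h2.to₂).of_eq fun l => rfl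
  exact (Primrec.pred.comp h1).to_comp.of_eq fun l => by
    simp [strToNat, Nat.pred_eq_sub_one]

def st9_dec (b : List Bool) : List Bool := ((Nat.bits (st9_ofBits b + 1)).reverse).tail

lemma st9_dec_spec (x : List Bool) : st9_dec (Nat.bits (strToNat x)) = x := by
  unfold st9_dec
  rw [st9_ofBits_bits, st9_strToNat_add_one, st9_bits_foldl, List.reverse_append]
  simp

lemma st9_computable_dec : Computable st9_dec :=
  Primrec.list_tail.to_comp.comp (Computable.list_reverse.comp
    (st9_computable_bits.comp (Computable.succ.comp st9_computable_ofBits)))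

/-! ### opre lemmas -/

lemma st9_opre_length (B : ℕ → Bool) (n : ℕ) : (opre B n).length = n := by simp [opre]

lemma st9_opre_take (B : ℕ → Bool) {a b : ℕ} (h : a ≤ b) :
    (opre B b).take a = opre B a := by
  simp [opre, ← List.map_take, List.take_range, Nat.min_eq_left h]

lemma st9_opre_prefix (B : ℕ → Bool) {a b : ℕ} (h : a ≤ b) : opre B a <+: opre B b := by
  rw [← st9_opre_take B h]; exact List.take_prefix _ _

/-! ### Cplx lemmas -/

lemma st9_total (hU : Optimal U) (x : List Bool) :
    {k | ∃ p : List Bool, p.length = k ∧ x ∈ U p}.Nonempty := by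
  obtain ⟨c, hc⟩ := hU.2 (fun p => Part.some p) Partrec.some
  obtain ⟨q, _, hq⟩ := hc x x (Part.mem_some x)
  exact ⟨q.length, q, rfl, hq⟩

lemma st9_cplx_le {x q : List Bool} (h : x ∈ U q) : Cplx U x ≤ q.length :=
  Nat.sInf_le ⟨q, rfl, h⟩

lemma st9_desc (hU : Optimal U) (x : List Bool) :
    ∃ p : List Bool, p.length = Cplx U x ∧ x ∈ U p :=
  Nat.sInf_mem (st9_total hU x)

lemma st9_cplx_le_cplxN (hU : Optimal U) :
    ∃ d, ∀ x : List Bool, Cplx U x ≤ CplxN U (strToNat x) + d := by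
  have hM : Partrec (fun p => (U p).map st9_dec) :=
    hU.1.map (st9_computable_dec.comp Computable.snd).to₂
  obtain ⟨d, hd⟩ := hU.2 _ hM
  refine ⟨d, fun x => ?_⟩
  obtain ⟨p, hp, hmem⟩ := st9_desc hU (Nat.bits (strToNat x))
  obtain ⟨q, hqlen, hq⟩ := hd p x ((Part.mem_map_iff _).2 ⟨_, hmem, st9_dec_spec x⟩)
  calc Cplx U x ≤ q.length := st9_cplx_le hq
    _ ≤ p.length + d := hqlen
    _ = CplxN U (strToNat x) + d := by rw [hp]; rfl

/-! ### maxu / ubar -/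

def st9_maxu (u : ℕ → ℕ) : ℕ → ℕ := fun n =>
  Nat.rec (u 0) (fun y IH => max IH (u (y + 1))) n

lemma st9_maxu_mono (u : ℕ → ℕ) : Monotone (st9_maxu u) :=
  monotone_nat_of_le_succ fun n => le_max_left _ _

lemma st9_le_maxu (u : ℕ → ℕ) {k n : ℕ} (h : k ≤ n) : u k ≤ st9_maxu u n := by
  induction n with
  | zero => interval_cases k; exact le_refl _
  | succ n IH =>
    rcases Nat.lt_or_ge k (n + 1) with h' | h'
    · exact le_trans (IH (Nat.lt_succ_iff.1 h')) (le_max_left _ _)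
    · have : k = n + 1 := le_antisymm h h'
      subst this; exact le_max_right _ _

lemma st9_computable_maxu {u : ℕ → ℕ} (hu : Computable u) : Computable (st9_maxu u) := by
  have hh : Computable₂ fun (a : ℕ) (p : ℕ × ℕ) => max p.2 (u (p.1 + 1)) := by
    have : Computable fun x : ℕ × (ℕ × ℕ) => max x.2.2 (u (x.2.1 + 1)) :=
      Computable₂.comp Primrec.nat_max.to_comp
        (Computable.snd.comp Computable.snd)
        (hu.comp (Computable.succ.comp (Computable.fst.comp Computable.snd)))
    exact this.to₂
  have := Computable.nat_rec Computable.id (Computable.const (u 0)) hh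
  exact this.of_eq fun n => rfl

/-! ### Forward direction -/

lemma st9_forward (hU : Optimal U) (hAC : AntiComplex U A) :
    ∀ f : ℕ → ℕ, WttRed f A → ∃ c, ∀ n, CplxN U (f n) ≤ n + c := by
  rintro f ⟨u, hu, F, hF, hmono, hfn⟩
  set ub : ℕ → ℕ := fun n => n + 1 + st9_maxu u n with hubdef
  have hub_mono : StrictMono ub := strictMono_nat_of_lt_succ fun n => by
    have := st9_maxu_mono u (Nat.le_succ n)
    simp only [hubdef, Nat.succ_eq_add_one] at this ⊢
    omega
  have hub_ord : IsOrder ub := by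
    refine ⟨?_, hub_mono.monotone, fun m => ⟨m, by simp only [hubdef]; omega⟩⟩
    exact Primrec.nat_add.to_comp.comp
      (Primrec.succ.to_comp) (st9_computable_maxu hu)
  obtain ⟨N, hN⟩ := eventually_atTop.1 (hAC ub hub_ord)
  -- the machine
  have hpred : Computable₂ fun (x : List Bool × List Bool) (m : ℕ) =>
      decide (ub m = x.2.length) :=
    (Primrec.eq.decide.to_comp.comp
      (hub_ord.1.comp Computable.snd)
      (Computable.list_length.comp ((Computable.snd (α := List Bool)).comp Computable.fst))).to₂
  set M : List Bool →. List Bool := fun p => (U p).bind fun σ =>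
    (Nat.rfind fun m => Part.some (decide (ub m = σ.length))).bind fun m =>
      (F σ m).map Nat.bits with hMdef
  have hMpart : Partrec M := by
    refine hU.1.bind (Partrec.bind ?_ ?_)
    · exact (Partrec.rfind hpred.partrec₂).of_eq fun x => by rfl
    · exact (hF.comp ((Computable.snd (α := List Bool)).comp Computable.fst)
        Computable.snd).map (st9_computable_bits.comp Computable.snd).to₂
  obtain ⟨c, hc⟩ := hU.2 M hMpart
  have key : ∀ n, CplxN U (f n) ≤ Cplx U (opre A (ub n)) + c := by
    intro n
    obtain ⟨p, hp, hpm⟩ := st9_desc hU (opre A (ub n))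
    have hrf : n ∈ Nat.rfind fun m =>
        Part.some (decide (ub m = (opre A (ub n)).length)) := by
      refine Nat.mem_rfind.2 ?_
      constructor
      · simp [st9_opre_length]
      · intro m hm
        simp only [Part.mem_some_iff, st9_opre_length]
        simpa using Nat.ne_of_lt (hub_mono hm)
    have hFm : f n ∈ F (opre A (ub n)) n := by
      refine hmono _ _ _ _ (st9_opre_prefix A ?_) (hfn n)
      exact le_trans (st9_le_maxu u (le_refl n)) (by simp only [hubdef]; omega)
    have hbm : Nat.bits (f n) ∈ M p := by
      rw [hMdef]
      refine Part.mem_bind_iff.2 ⟨_, hpm, ?_⟩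
      exact Part.mem_bind_iff.2 ⟨n, hrf, (Part.mem_map_iff _).2 ⟨_, hFm, rfl⟩⟩
    obtain ⟨q, hql, hqm⟩ := hc p _ hbm
    calc CplxN U (f n) ≤ q.length := st9_cplx_le hqm
      _ ≤ p.length + c := hql
      _ = Cplx U (opre A (ub n)) + c := by rw [hp]
  refine ⟨c + (Finset.range N).sup fun n => CplxN U (f n), fun n => ?_⟩
  rcases Nat.lt_or_ge n N with h | h
  · have h3 : CplxN U (f n) ≤ (Finset.range N).sup fun k => CplxN U (f k) :=
      Finset.le_sup (f := fun k => CplxN U (f k)) (Finset.mem_range.2 h)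
    omega
  · have h1 := key n
    have h2 := hN n h
    omega

/-! ### Backward direction -/

lemma st9_wttred_opre (g : ℕ → ℕ) (hg : Computable g) :
    WttRed (fun n => strToNat (opre A (g n))) A := by
  classical
  set F : List Bool → ℕ →. ℕ := fun σ n =>
    bif decide (g n ≤ σ.length) then
      Part.some (strToNat ((List.range (g n)).map fun i => σ.getD i false))
    else Part.none with hFdef
  refine ⟨g, hg, F, ?_, ?_, ?_⟩
  · -- Partrec₂
    have hh : Primrec fun x : List Bool × ℕ =>
        (List.range x.2).map fun i => x.1.getD i false := by
      refine Primrec.list_map (Primrec.list_range.comp Primrec.snd) ?_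
      exact ((Primrec.list_getD false).comp (Primrec.fst.comp Primrec.fst) Primrec.snd).to₂
    have hc : Computable fun x : List Bool × ℕ => decide (g x.2 ≤ x.1.length) :=
      Primrec.nat_le.decide.to_comp.comp (hg.comp Computable.snd)
        (Computable.list_length.comp Computable.fst)
    have hval : Computable fun x : List Bool × ℕ =>
        strToNat ((List.range (g x.2)).map fun i => x.1.getD i false) :=
      st9_computable_strToNat.comp (hh.to_comp.comp
        (Computable.pair Computable.fst (hg.comp Computable.snd)))
    exact Partrec.cond hc hval.partrec Partrec.none
  · -- monotone
    intro σ τ n y hpre hy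
    simp only [hFdef] at hy ⊢
    rcases hle : decide (g n ≤ σ.length) with _ | _
    · rw [hle] at hy; simp at hy
    · rw [hle] at hy
      simp only [Bool.cond_true, Part.mem_some_iff] at hy
      have hgn : g n ≤ σ.length := of_decide_eq_true hle
      obtain ⟨t, rfl⟩ := hpre
      have hlen : g n ≤ (σ ++ t).length := by simp; omega
      rw [hy]
      simp only [decide_eq_true hlen, Bool.cond_true, Part.mem_some_iff]
      congr 1
      refine List.map_congr_left fun i hi => ?_
      have hi' : i < g n := List.mem_range.1 hi
      exact (List.getD_append _ _ _ _ (lt_of_lt_of_le hi' hgn)).symm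
  · -- computes f
    intro n
    simp only [hFdef]
    have hlen : g n ≤ (opre A (g n)).length := by rw [st9_opre_length]
    have hlist : ((List.range (g n)).map fun i => (opre A (g n)).getD i false)
        = opre A (g n) := by
      refine List.ext_getElem (by simp [st9_opre_length]) fun i h1 h2 => ?_
      simp only [List.getElem_map, List.getElem_range]
      rw [List.getD_eq_getElem _ _ (by simp only [st9_opre_length]; simpa using h1)]
    simp only [decide_eq_true hlen, Bool.cond_true, Part.mem_some_iff, hlist]

lemma st9_backward (hU : Optimal U)
    (H : ∀ f : ℕ → ℕ, WttRed f A → ∃ c, ∀ n, CplxN U (f n) ≤ n + c) :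
    AntiComplex U A := by
  intro g hgord
  obtain ⟨d, hd⟩ := st9_cplx_le_cplxN hU
  have hg2 : Computable fun n => g (2 * n) :=
    hgord.1.comp (Primrec.nat_mul.to_comp.comp (Computable.const 2) Computable.id)
  have hg21 : Computable fun n => g (2 * n + 1) :=
    hgord.1.comp (Primrec.succ.to_comp.comp
      (Primrec.nat_mul.to_comp.comp (Computable.const 2) Computable.id))
  obtain ⟨c₀, hc₀⟩ := H _ (st9_wttred_opre (A := A) (fun n => g (2 * n)) hg2)
  obtain ⟨c₁, hc₁⟩ := H _ (st9_wttred_opre (A := A) (fun n => g (2 * n + 1)) hg21)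
  rw [eventually_atTop]
  refine ⟨2 * (c₀ + d) + 2 * (c₁ + d) + 2, fun n hn => ?_⟩
  rcases Nat.even_or_odd n with ⟨m, hm⟩ | ⟨m, hm⟩
  · have h1 := hd (opre A (g (2 * m)))
    have h2 : CplxN U (strToNat (opre A (g (2 * m)))) ≤ m + c₀ := hc₀ m
    have hn' : n = 2 * m := by omega
    rw [hn']
    omega
  · have h1 := hd (opre A (g (2 * m + 1)))
    have h2 : CplxN U (strToNat (opre A (g (2 * m + 1)))) ≤ m + c₁ := hc₁ m
    have hn' : n = 2 * m + 1 := by omega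
    rw [hn']
    omega

end Stmt9Aux

theorem stmt9 (U : List Bool →. List Bool) (hU : Optimal U) (A : ℕ → Bool) :
    AntiComplex U A ↔ ∀ f : ℕ → ℕ, WttRed f A → ∃ c, ∀ n, CplxN U (f n) ≤ n + c :=
  ⟨fun h => st9_forward hU h, fun h => st9_backward hU h⟩
end

section
/- If A is anti-complex, then there is a constant c such that for every f ≤_{wtt} A, C(f(n)) ≤⁺ c·log₂(n). -/
open scoped Classical
open Filter

namespace Aux

/-- value of a binary string, read with an implicit leading 1. -/
def strVal (l : List Bool) : ℕ := l.foldl (fun a b => 2 * a + cond b 1 0) 1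

/-- decode a bit list (LSB first) to a natural number. -/
def ofBits (l : List Bool) : ℕ := l.foldr (fun b n => 2 * n + cond b 1 0) 0

lemma bit_eq (b : Bool) (n : ℕ) : Nat.bit b n = 2 * n + cond b 1 0 := by
  cases b <;> simp [Nat.bit_val]

lemma ofBits_cons (b : Bool) (l : List Bool) : ofBits (b :: l) = Nat.bit b (ofBits l) := by
  simp [ofBits, bit_eq]

lemma ofBits_bits : ∀ n : ℕ, ofBits (Nat.bits n) = n := by
  intro n
  induction n using Nat.strong_induction_on with
  | _ n ih =>
    rcases Nat.eq_zero_or_pos n with h0 | h0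
    · simp [h0, ofBits, Nat.zero_bits]
    · have hd : n.div2 < n := by
        rw [Nat.div2_val]; exact Nat.div_lt_self h0 (by norm_num)
      have hb : Nat.bits n = n.bodd :: Nat.bits n.div2 := by
        conv_lhs => rw [← Nat.bit_bodd_div2 n]
        refine Nat.bits_append_bit _ _ ?_
        intro hdd
        have := Nat.bit_bodd_div2 n
        rw [hdd] at this
        cases hbo : n.bodd
        · rw [hbo] at this; simp [bit_eq] at this; omega
        · rfl
      rw [hb, ofBits_cons, ih _ hd, Nat.bit_bodd_div2]

lemma strVal_pos : ∀ (l : List Bool) (a : ℕ), 1 ≤ a → 1 ≤ l.foldl (fun a b => 2 * a + cond b 1 0) a := by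
  intro l
  induction l with
  | nil => intro a ha; simpa
  | cons b t ih => intro a ha; simp only [List.foldl_cons]; exact ih _ (by cases b <;> omega)

lemma one_le_strVal (l : List Bool) : 1 ≤ strVal l := strVal_pos l 1 le_rfl

lemma strVal_concat (l : List Bool) (b : Bool) : strVal (l ++ [b]) = Nat.bit b (strVal l) := by
  simp [strVal, List.foldl_append, bit_eq]

lemma bits_strVal : ∀ l : List Bool, Nat.bits (strVal l) = l.reverse ++ [true] := by
  intro l
  induction l using List.reverseRecOn with
  | nil => simp [strVal, Nat.one_bits]
  | append_singleton t b ih =>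
    rw [strVal_concat, Nat.bits_append_bit _ _ (fun h => absurd h (by have := one_le_strVal t; omega)), ih]
    simp

lemma strVal_injective : Function.Injective strVal := by
  intro l l' h
  have := bits_strVal l
  rw [h, bits_strVal l'] at this
  have := List.append_inj_left' this rfl
  exact (List.reverse_injective this).symm

lemma strToNat_eq (l : List Bool) : strToNat l = strVal l - 1 := rfl

lemma strVal_eq_strToNat (l : List Bool) : strVal l = strToNat l + 1 := by
  have := one_le_strVal l; rw [strToNat_eq]; omega

lemma strToNat_injective : Function.Injective strToNat := by
  intro l l' h
  apply strVal_injective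
  rw [strVal_eq_strToNat, strVal_eq_strToNat, h]

lemma size_strToNat_le (l : List Bool) : Nat.size (strToNat l) ≤ l.length + 1 := by
  have h1 : Nat.size (strVal l) = l.length + 1 := by
    rw [← Nat.size_eq_bits_len, bits_strVal]; simp
  calc Nat.size (strToNat l) ≤ Nat.size (strVal l) := Nat.size_le_size (by rw [strVal_eq_strToNat]; omega)
    _ = l.length + 1 := h1

/-- computable version of `Nat.bits` via fuel iteration -/
def bitsStep : ℕ × List Bool → ℕ × List Bool :=
  fun p => if p.1 = 0 then p else (p.1.div2, p.2 ++ [p.1.bodd])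

def bitsC (y : ℕ) : List Bool := (bitsStep^[y] (y, [])).2

lemma bitsStep_iter_zero (l : List Bool) : ∀ fuel, bitsStep^[fuel] (0, l) = (0, l) := by
  intro fuel
  apply Function.iterate_fixed
  simp [bitsStep]

lemma bitsStep_iter : ∀ (fuel v : ℕ) (l : List Bool), v < 2 ^ fuel →
    bitsStep^[fuel] (v, l) = (0, l ++ Nat.bits v) := by
  intro fuel
  induction fuel with
  | zero => intro v l hv; interval_cases v; simp [Nat.zero_bits]
  | succ fuel ih =>
    intro v l hv
    rcases Nat.eq_zero_or_pos v with h0 | h0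
    · subst h0; rw [bitsStep_iter_zero]; simp [Nat.zero_bits]
    · have hstep : bitsStep (v, l) = (v.div2, l ++ [v.bodd]) := by
        simp [bitsStep]; omega
      have hd : v.div2 < 2 ^ fuel := by
        rw [Nat.div2_val]
        rw [pow_succ] at hv
        omega
      rw [Function.iterate_succ_apply, hstep, ih _ _ hd]
      have hb : Nat.bits v = v.bodd :: Nat.bits v.div2 := by
        conv_lhs => rw [← Nat.bit_bodd_div2 v]
        refine Nat.bits_append_bit _ _ ?_
        intro hdd
        cases hbo : v.bodd
        · have := Nat.bit_bodd_div2 v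
          rw [hdd, hbo] at this; simp [bit_eq] at this; omega
        · rfl
      rw [hb]
      simp

lemma bitsC_eq (y : ℕ) : bitsC y = Nat.bits y := by
  have := bitsStep_iter y y [] (Nat.lt_two_pow_self (n := y))
  rw [bitsC, this]
  simp

lemma ofBits_bitsC (y : ℕ) : ofBits (bitsC y) = y := by rw [bitsC_eq, ofBits_bits]

end Aux
namespace Aux

lemma primrec_ofBits : Primrec ofBits := by
  have hh : Primrec₂ fun (_ : List Bool) (p : Bool × ℕ) => 2 * p.2 + cond p.1 1 0 := by
    apply Primrec.nat_add.comp₂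
    · exact (Primrec.nat_mul.comp (Primrec.const 2) (Primrec.snd.comp Primrec.snd)).to₂
    · exact (Primrec.cond (Primrec.fst.comp Primrec.snd) (Primrec.const 1) (Primrec.const 0)).to₂
  exact (Primrec.list_foldr Primrec.id (Primrec.const 0) hh).of_eq fun l => rfl

lemma primrec_strToNat : Primrec strToNat := by
  have hh : Primrec₂ fun (_ : List Bool) (p : ℕ × Bool) => 2 * p.1 + cond p.2 1 0 := by
    apply Primrec.nat_add.comp₂
    · exact (Primrec.nat_mul.comp (Primrec.const 2) (Primrec.fst.comp Primrec.snd)).to₂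
    · exact (Primrec.cond (Primrec.snd.comp Primrec.snd) (Primrec.const 1) (Primrec.const 0)).to₂
  have h1 := Primrec.list_foldl Primrec.id (Primrec.const 1) hh
  exact (Primrec.nat_sub.comp h1 (Primrec.const 1)).of_eq fun l => rfl

lemma primrec_bitsStep : Primrec bitsStep := by
  have hc : PrimrecPred fun p : ℕ × List Bool => p.1 = 0 :=
    (Primrec.eq.comp Primrec.fst (Primrec.const 0) : _)
  apply Primrec.ite hc Primrec.id
  exact Primrec.pair (Primrec.nat_div2.comp Primrec.fst)
    (Primrec.list_concat.comp Primrec.snd (Primrec.nat_bodd.comp Primrec.fst))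

lemma primrec_bitsC : Primrec bitsC := by
  have h : Primrec fun y : ℕ => (bitsStep^[y] ((y, []) : ℕ × List Bool)) :=
    Primrec.nat_iterate Primrec.id (Primrec.pair Primrec.id (Primrec.const []))
      (primrec_bitsStep.comp Primrec.snd).to₂
  exact Primrec.snd.comp h

/-- monotone unbounded majorant of a function -/
def ubar (u : ℕ → ℕ) : ℕ → ℕ := fun n => Nat.rec (u 0) (fun y IH => max IH (u (y + 1)) + 1) n

lemma ubar_zero (u : ℕ → ℕ) : ubar u 0 = u 0 := rfl
lemma ubar_succ (u : ℕ → ℕ) (n : ℕ) : ubar u (n + 1) = max (ubar u n) (u (n + 1)) + 1 := rfl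

lemma ubar_strictMono (u : ℕ → ℕ) : StrictMono (ubar u) := by
  apply strictMono_nat_of_lt_succ
  intro n; rw [ubar_succ]; omega

lemma le_ubar (u : ℕ → ℕ) (n : ℕ) : u n ≤ ubar u n := by
  cases n with
  | zero => exact le_of_eq (ubar_zero u).symm
  | succ m => rw [ubar_succ]; omega

lemma self_le_ubar (u : ℕ → ℕ) (n : ℕ) : n ≤ ubar u n := (ubar_strictMono u).le_apply

lemma computable_ubar {u : ℕ → ℕ} (hu : Computable u) : Computable (ubar u) := by
  have hstep : Computable₂ fun (_ : ℕ) (p : ℕ × ℕ) => max p.2 (u (p.1 + 1)) + 1 := by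
    apply Computable.succ.comp₂
    apply (Primrec.nat_max.to_comp).comp₂
    · exact (Computable.snd.comp Computable.snd).to₂
    · exact (hu.comp (Computable.succ.comp (Computable.fst.comp Computable.snd))).to₂
  exact (Computable.nat_rec Computable.id (hu.comp (Computable.const 0)) hstep).of_eq fun n => rfl

lemma computable_pow2 : Computable fun k : ℕ => 2 ^ k := by
  have : Primrec₂ (fun a b : ℕ => a ^ b) := Primrec₂.unpaired'.1 Nat.Primrec.pow
  exact (this.comp (Primrec.const 2) Primrec.id).to_comp

lemma size_le_log (n : ℕ) : Nat.size n ≤ Nat.log 2 n + 1 :=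
  Nat.size_le.mpr (Nat.lt_pow_succ_log_self (by norm_num) n)

end Aux
namespace Aux

/-- Decoding of a string code, with junk value for non-codes. -/
def decStr (k : ℕ) : List Bool := ((Encodable.decode k : Option (List Bool))).getD []

/-- The machine used in the proof: decode the input as `bits (pair n m)`, search a
code `k` of a string `p` with `strToNat p = m`, run `U` on `p` to get `σ`, then `F σ n`. -/
def mach (U : List Bool →. List Bool) (F : List Bool → ℕ →. ℕ) : List Bool →. List Bool :=
  fun q =>
    (Nat.rfind ((fun k : ℕ =>
        decide ((Encodable.decode k : Option (List Bool)).map strToNat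
          = some (Nat.unpair (ofBits q)).2)) : ℕ →. Bool)).bind
      fun k => (U (decStr k)).bind
        fun σ => (F σ (Nat.unpair (ofBits q)).1).map bitsC

lemma computable_decStr : Computable decStr :=
  Computable.option_getD Computable.decode (Computable.const [])

lemma partrec_mach {U : List Bool →. List Bool} {F : List Bool → ℕ →. ℕ}
    (hU : Partrec U) (hF : Partrec₂ F) : Partrec (mach U F) := by
  have hm1 : Computable fun q : List Bool => (Nat.unpair (ofBits q)).1 :=
    (Primrec.fst.comp (Primrec.unpair.comp primrec_ofBits)).to_comp
  have hpred : Computable₂ fun (q : List Bool) (k : ℕ) =>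
      decide ((Encodable.decode k : Option (List Bool)).map strToNat
        = some (Nat.unpair (ofBits q)).2) :=
    (Primrec.eq.comp
      (Primrec.option_map (Primrec.decode.comp Primrec.snd) (primrec_strToNat.comp Primrec.snd).to₂)
      (Primrec.option_some.comp
        (Primrec.snd.comp (Primrec.unpair.comp (primrec_ofBits.comp Primrec.fst))))).decide.to_comp
  have hrf : Partrec fun q : List Bool => Nat.rfind ((fun k : ℕ =>
      decide ((Encodable.decode k : Option (List Bool)).map strToNat
        = some (Nat.unpair (ofBits q)).2)) : ℕ →. Bool) :=
    Partrec.rfind hpred.partrec₂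
  have hinner : Partrec₂ fun (q : List Bool) (k : ℕ) =>
      (U (decStr k)).bind fun σ => (F σ (Nat.unpair (ofBits q)).1).map bitsC := by
    have hUc : Partrec fun p : List Bool × ℕ => U (decStr p.2) :=
      hU.comp (computable_decStr.comp Computable.snd)
    have h2 : Partrec₂ fun (p : List Bool × ℕ) (σ : List Bool) =>
        (F σ (Nat.unpair (ofBits p.1)).1).map bitsC := by
      have hFc : Partrec fun a : (List Bool × ℕ) × List Bool =>
          F a.2 (Nat.unpair (ofBits a.1.1)).1 :=
        hF.comp Computable.snd (hm1.comp (Computable.fst.comp Computable.fst))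
      exact (hFc.map ((primrec_bitsC.to_comp).comp Computable.snd).to₂).to₂
    exact (hUc.bind h2).to₂
  exact hrf.bind hinner

lemma mach_mem {U : List Bool →. List Bool} {F : List Bool → ℕ →. ℕ} {p σ : List Bool} {n y : ℕ}
    (hσ : σ ∈ U p) (hy : y ∈ F σ n) :
    Nat.bits y ∈ mach U F (bitsC (Nat.pair n (strToNat p))) := by
  set q := bitsC (Nat.pair n (strToNat p)) with hqdef
  have hq : ofBits q = Nat.pair n (strToNat p) := ofBits_bitsC _
  have hq1 : (Nat.unpair (ofBits q)).1 = n := by rw [hq, Nat.unpair_pair]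
  have hq2 : (Nat.unpair (ofBits q)).2 = strToNat p := by rw [hq, Nat.unpair_pair]
  set pred : ℕ → Bool := fun k : ℕ =>
      decide ((Encodable.decode k : Option (List Bool)).map strToNat
        = some (Nat.unpair (ofBits q)).2) with hpreddef
  have hpe : pred (Encodable.encode p) = true := by
    simp [hpreddef, Encodable.encodek, hq2]
  obtain ⟨k₀, hk₀, -⟩ := Nat.rfind_min' hpe
  have hk₀spec : pred k₀ = true := by
    have h := Nat.rfind_spec hk₀
    rw [PFun.coe_val, Part.mem_some_iff] at h
    exact h.symm
  have hpk₀ : decStr k₀ = p := by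
    have h := of_decide_eq_true hk₀spec
    rw [hq2] at h
    obtain ⟨p₀, hp₀, hp₀'⟩ := Option.map_eq_some_iff.mp h
    have : p₀ = p := strToNat_injective hp₀'
    rw [decStr, hp₀, this]; rfl
  rw [mach]
  refine Part.mem_bind_iff.mpr ⟨k₀, hk₀, ?_⟩
  refine Part.mem_bind_iff.mpr ⟨σ, by rw [hpk₀]; exact hσ, ?_⟩
  exact (Part.mem_map_iff _).mpr ⟨y, by rw [hq1]; exact hy, bitsC_eq y⟩

lemma cplx_le {U : List Bool →. List Bool} {x p : List Bool} (hp : x ∈ U p) :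
    Cplx U x ≤ p.length := Nat.sInf_le ⟨p, rfl, hp⟩

lemma cplx_spec {U : List Bool →. List Bool} (hU : Optimal U) (x : List Bool) :
    ∃ p : List Bool, p.length = Cplx U x ∧ x ∈ U p := by
  obtain ⟨c, hc⟩ := hU.2 (fun p => Part.some p) Partrec.some
  obtain ⟨p, -, hp⟩ := hc x x (Part.mem_some x)
  exact Nat.sInf_mem (⟨p.length, p, rfl, hp⟩ :
    Set.Nonempty { k | ∃ p : List Bool, p.length = k ∧ x ∈ U p })

lemma opre_prefix (A : ℕ → Bool) {a b : ℕ} (hab : a ≤ b) : opre A a <+: opre A b := by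
  have h1 : List.range a <+: List.range b := by
    have h := List.take_prefix a (List.range b)
    rwa [List.take_range, min_eq_left hab] at h
  exact h1.map A

end Aux
theorem stmt12 (U : List Bool →. List Bool) (hU : Optimal U) (A : ℕ → Bool)
    (h : AntiComplex U A) :
    ∃ c, ∀ f : ℕ → ℕ, WttRed f A → ∃ d, ∀ n, CplxN U (f n) ≤ c * Nat.log 2 n + d := by
  refine ⟨2, ?_⟩
  rintro f ⟨u, hu, F, hF, hmono, hfn⟩
  -- an order function dominating the use on exponential arguments
  set v := Aux.ubar u with hv
  set g : ℕ → ℕ := fun k => v (2 ^ k) with hgdef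
  have hgord : IsOrder g := by
    refine ⟨(Aux.computable_ubar hu).comp Aux.computable_pow2, ?_, ?_⟩
    · intro a b hab
      exact (Aux.ubar_strictMono u).monotone (Nat.pow_le_pow_right (by norm_num) hab)
    · intro m
      exact ⟨m, (Nat.lt_two_pow_self (n := m)).le.trans (Aux.self_le_ubar u _)⟩
  obtain ⟨K, hK⟩ := Filter.eventually_atTop.mp (h g hgord)
  obtain ⟨cM, hcM⟩ := hU.2 (Aux.mach U F) (Aux.partrec_mach hU.1 hF)
  refine ⟨2 * K + 4 + cM, ?_⟩
  intro n
  set k := max (Nat.size n) K with hk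
  have hCk : Cplx U (opre A (g k)) ≤ k := hK k (le_max_right _ _)
  obtain ⟨p, hplen, hpU⟩ := Aux.cplx_spec hU (opre A (g k))
  have hp_le : p.length ≤ k := hplen ▸ hCk
  -- the reduction computes `f n` from `opre A (g k)`
  have hn2k : n ≤ 2 ^ k :=
    (Nat.lt_size_self n).le.trans (Nat.pow_le_pow_right (by norm_num) (le_max_left _ _))
  have hun : u n ≤ g k := (Aux.le_ubar u n).trans ((Aux.ubar_strictMono u).monotone hn2k)
  have hfFσ : f n ∈ F (opre A (g k)) n := hmono _ _ _ _ (Aux.opre_prefix A hun) (hfn n)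
  have hmem : Nat.bits (f n) ∈ Aux.mach U F (Aux.bitsC (Nat.pair n (strToNat p))) :=
    Aux.mach_mem hpU hfFσ
  obtain ⟨q', hq'len, hq'U⟩ := hcM _ _ hmem
  have hCle : CplxN U (f n) ≤ (Aux.bitsC (Nat.pair n (strToNat p))).length + cM :=
    (Aux.cplx_le hq'U).trans hq'len
  -- length estimate
  have hlen : (Aux.bitsC (Nat.pair n (strToNat p))).length = Nat.size (Nat.pair n (strToNat p)) := by
    rw [Aux.bitsC_eq, Nat.size_eq_bits_len]
  have hsizem : Nat.size (strToNat p) ≤ k + 1 := (Aux.size_strToNat_le p).trans (by omega)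
  have h1 : n < 2 ^ (k + 1) :=
    (Nat.lt_size_self n).trans_le (Nat.pow_le_pow_right (by norm_num) (by omega))
  have h2 : strToNat p < 2 ^ (k + 1) :=
    (Nat.lt_size_self _).trans_le (Nat.pow_le_pow_right (by norm_num) hsizem)
  have hmax : max n (strToNat p) + 1 ≤ 2 ^ (k + 1) := by omega
  have hNlt : Nat.pair n (strToNat p) < 2 ^ (2 * (k + 1)) := by
    calc Nat.pair n (strToNat p) < (max n (strToNat p) + 1) ^ 2 :=
          Nat.pair_lt_max_add_one_sq _ _
      _ ≤ (2 ^ (k + 1)) ^ 2 := Nat.pow_le_pow_left hmax 2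
      _ = 2 ^ (2 * (k + 1)) := by rw [← pow_mul, mul_comm]
  have hsizeN : Nat.size (Nat.pair n (strToNat p)) ≤ 2 * (k + 1) := Nat.size_le.mpr hNlt
  have hkle : k ≤ Nat.size n + K := by omega
  have hslog : Nat.size n ≤ Nat.log 2 n + 1 := Aux.size_le_log n
  omega
end

section
/- Every Schnorr trivial set is anti-complex. -/
open scoped Classical
open Filter

namespace Stmt16Aux

def stStep (a : ℕ) (b : Bool) : ℕ := 2 * a + cond b 1 0

lemma strToNat_def (l : List Bool) : strToNat l = l.foldl stStep 1 - 1 := rfl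

lemma stFoldl_pos : ∀ (l : List Bool) (a : ℕ), 1 ≤ a → 1 ≤ l.foldl stStep a := by
  intro l
  induction l with
  | nil => intro a ha; simpa using ha
  | cons b t ih =>
    intro a ha
    have : 1 ≤ stStep a b := by unfold stStep; cases b <;> simp <;> omega
    simpa using ih _ this

lemma strToNat_append (l : List Bool) (b : Bool) :
    strToNat (l ++ [b]) = 2 * strToNat l + 1 + cond b 1 0 := by
  have h1 : 1 ≤ l.foldl stStep 1 := stFoldl_pos l 1 le_rfl
  have h2 : (l ++ [b]).foldl stStep 1 = stStep (l.foldl stStep 1) b := by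
    simp [List.foldl_append, stStep]
  rw [strToNat_def, strToNat_def l, h2]
  simp only [stStep]; cases b <;> simp <;> omega

lemma strToNat_primrec : Primrec strToNat := by
  have h1 : Primrec (fun l : List Bool => l.foldl stStep 1) := by
    have hstep : Primrec₂ (fun (_ : List Bool) (p : ℕ × Bool) => stStep p.1 p.2) := by
      have : Primrec (fun x : List Bool × (ℕ × Bool) => 2 * x.2.1 + cond x.2.2 1 0) :=
        Primrec.nat_add.comp
          (Primrec.nat_mul.comp (Primrec.const 2) (Primrec.fst.comp Primrec.snd))
          (Primrec.cond (Primrec.snd.comp Primrec.snd) (Primrec.const 1) (Primrec.const 0))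
      exact this.to₂
    exact Primrec.list_foldl Primrec.id (Primrec.const 1) hstep
  exact (Primrec.nat_sub.comp h1 (Primrec.const 1)).of_eq fun l => (strToNat_def l).symm

lemma strToNat_surj (v : ℕ) :
    ∃ p : List Bool, strToNat p = v ∧ p.length = Nat.log 2 (v + 1) := by
  induction v using Nat.strong_induction_on with
  | _ v ih =>
    rcases Nat.eq_zero_or_pos v with h0 | hv
    · subst h0
      exact ⟨[], rfl, by simp⟩
    · set a := (v - 1) / 2 with ha_def
      have ha : a < v := by omega
      obtain ⟨p, hp, hlen⟩ := ih a ha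
      refine ⟨p ++ [decide ((v - 1) % 2 = 1)], ?_, ?_⟩
      · rw [strToNat_append, hp]
        rcases Nat.mod_two_eq_zero_or_one (v - 1) with h | h <;> simp [h] <;> omega
      · have hlog : Nat.log 2 (v + 1) = Nat.log 2 ((v + 1) / 2) + 1 :=
          Nat.log_of_one_lt_of_le one_lt_two (by omega)
        have hdiv : (v + 1) / 2 = a + 1 := by omega
        simp [hlen, hlog, hdiv]

lemma four_log_le (m : ℕ) : 4 * Nat.log 2 m ≤ m + 4 := by
  induction m using Nat.strong_induction_on with
  | _ m ih =>
    rcases Nat.eq_zero_or_pos m with h0 | hm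
    · simp [h0]
    rcases lt_or_ge m 8 with h8 | h8
    · rcases lt_or_ge m 4 with h4 | h4
      · have : Nat.log 2 m < 2 := Nat.log_lt_of_lt_pow (by omega) (by omega)
        omega
      · have : Nat.log 2 m < 3 := Nat.log_lt_of_lt_pow (by omega) (by omega)
        omega
    · have heq : Nat.log 2 m = Nat.log 2 (m / 2) + 1 :=
        Nat.log_of_one_lt_of_le one_lt_two (by omega)
      have ih2 := ih (m / 2) (by omega)
      omega

lemma opre_getD (B : ℕ → Bool) {i m : ℕ} (h : i < m) : (opre B m).getD i false = B i := by
  have hl : i < (opre B m).length := by simpa [opre] using h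
  rw [List.getD_eq_getElem _ _ hl]
  simp [opre]

end Stmt16Aux

namespace Stmt16Aux

def nseqF (h₀ : ℕ → ℕ) : ℕ → ℕ
  | 0 => h₀ 0 + 1
  | k + 1 => max (nseqF h₀ k + 1) (h₀ (k + 1) + 1)

lemma nseqF_strictMono (h₀ : ℕ → ℕ) : StrictMono (nseqF h₀) :=
  strictMono_nat_of_lt_succ fun n => by
    have := le_max_left (nseqF h₀ n + 1) (h₀ (n + 1) + 1)
    simp only [nseqF]; omega

lemma h0_lt_nseqF (h₀ : ℕ → ℕ) (k : ℕ) : h₀ k < nseqF h₀ k := by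
  cases k with
  | zero => simp [nseqF]
  | succ t =>
    have := le_max_right (nseqF h₀ t + 1) (h₀ (t + 1) + 1)
    simp only [nseqF]; omega

lemma nseqF_computable {h₀ : ℕ → ℕ} (hc : Computable h₀) : Computable (nseqF h₀) := by
  have hstep : Computable₂ (fun (_ : ℕ) (p : ℕ × ℕ) => max (p.2 + 1) (h₀ (p.1 + 1) + 1)) := by
    have : Computable (fun x : ℕ × (ℕ × ℕ) => max (x.2.2 + 1) (h₀ (x.2.1 + 1) + 1)) :=
      Primrec.nat_max.to_comp.comp
        (Computable.succ.comp (Computable.snd.comp Computable.snd))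
        (Computable.succ.comp (hc.comp (Computable.succ.comp (Computable.fst.comp Computable.snd))))
    exact this.to₂
  have := Computable.nat_rec Computable.id (Computable.const (h₀ 0 + 1)) hstep
  exact this.of_eq fun n => by
    induction n with
    | zero => rfl
    | succ k ihk =>
      simp only [id_eq] at ihk ⊢
      rw [nseqF, ← ihk]

def cntF (h₀ : ℕ → ℕ) (n : ℕ) : ℕ → ℕ
  | 0 => 0
  | m + 1 => cntF h₀ n m + cond (decide (nseqF h₀ (m + 1) ≤ n)) 1 0

def kOfF (h₀ : ℕ → ℕ) (n : ℕ) : ℕ := cntF h₀ n (n + 1)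

lemma kOfF_computable {h₀ : ℕ → ℕ} (hc : Computable h₀) : Computable (kOfF h₀) := by
  have hstep : Computable₂
      (fun (n : ℕ) (p : ℕ × ℕ) => p.2 + cond (decide (nseqF h₀ (p.1 + 1) ≤ n)) 1 0) := by
    have hb : Computable (fun x : ℕ × (ℕ × ℕ) => decide (nseqF h₀ (x.2.1 + 1) ≤ x.1)) :=
      Primrec.nat_le.decide.to_comp.comp
        ((nseqF_computable hc).comp (Computable.succ.comp (Computable.fst.comp Computable.snd)))
        Computable.fst
    have : Computable (fun x : ℕ × (ℕ × ℕ) =>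
        x.2.2 + cond (decide (nseqF h₀ (x.2.1 + 1) ≤ x.1)) 1 0) :=
      Primrec.nat_add.to_comp.comp (Computable.snd.comp Computable.snd)
        (Computable.cond hb (Computable.const 1) (Computable.const 0))
    exact this.to₂
  have := Computable.nat_rec Computable.succ (Computable.const 0) hstep
  exact this.of_eq fun n => by
    show _ = cntF h₀ n (n + 1)
    have key : ∀ m, Nat.rec (motive := fun _ => ℕ) 0
        (fun y IH => IH + cond (decide (nseqF h₀ (y + 1) ≤ n)) 1 0) m = cntF h₀ n m := by
      intro m
      induction m with
      | zero => rfl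
      | succ m ihm => rw [cntF, ← ihm]
    exact key (n + 1)

lemma kOfF_spec (h₀ : ℕ → ℕ) {n : ℕ} (hn : nseqF h₀ 0 ≤ n) :
    nseqF h₀ (kOfF h₀ n) ≤ n ∧ n < nseqF h₀ (kOfF h₀ n + 1) := by
  have hwit : n < nseqF h₀ (n + 1) := by
    have h1 : n + 1 ≤ nseqF h₀ (n + 1) := (nseqF_strictMono h₀).le_apply
    omega
  have hex : ∃ k, n < nseqF h₀ (k + 1) := ⟨n, hwit⟩
  set K := Nat.find hex with hK
  have hfind : n < nseqF h₀ (K + 1) := Nat.find_spec hex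
  have hKle : K ≤ n := Nat.find_min' hex hwit
  have hcnt : ∀ m, cntF h₀ n m = min K m := by
    intro m
    induction m with
    | zero => simp [cntF]
    | succ m ihm =>
      rcases le_or_gt K m with hKm | hmK
      · have hgt : n < nseqF h₀ (m + 1) :=
          lt_of_lt_of_le hfind (by
            exact (nseqF_strictMono h₀).monotone (by omega))
        rw [cntF, ihm]
        simp [Nat.not_le.2 hgt]
        omega
      · have hle : nseqF h₀ (m + 1) ≤ n := by
          have := Nat.find_min hex (m := m) hmK
          omega
        rw [cntF, ihm]
        simp [hle]
        omega
  have hkof : kOfF h₀ n = K := by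
    rw [kOfF, hcnt]
    omega
  constructor
  · rw [hkof]
    rcases Nat.eq_zero_or_pos K with h0 | hKpos
    · rw [h0]; exact hn
    · obtain ⟨t, ht⟩ : ∃ t, K = t + 1 := ⟨K - 1, by omega⟩
      have := Nat.find_min hex (m := t) (by omega)
      rw [ht]
      omega
  · rw [hkof]; exact hfind

end Stmt16Aux

namespace Stmt16Aux

def outerF : ℕ × (ℕ × List ℕ) → List Bool := fun x =>
  (List.range x.1).map fun i =>
    (((Encodable.decode (x.2.2.getD x.2.1 0)) : Option (List Bool)).getD []).getD i false

lemma outerF_primrec : Primrec outerF := by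
  have hd : Primrec (fun x : ℕ × (ℕ × List ℕ) =>
      ((Encodable.decode (x.2.2.getD x.2.1 0) : Option (List Bool)).getD [])) :=
    Primrec.option_getD.comp
      (Primrec.decode.comp ((Primrec.list_getD 0).comp (Primrec.snd.comp Primrec.snd)
        (Primrec.fst.comp Primrec.snd)))
      (Primrec.const [])
  exact Primrec.list_map (Primrec.list_range.comp Primrec.fst)
    (((Primrec.list_getD false).comp (hd.comp Primrec.fst) Primrec.snd).to₂)

def wF (h₀ f : ℕ → ℕ) (T : ℕ → List ℕ) (p : List Bool) : ℕ × (ℕ × List ℕ) :=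
  (f (strToNat p).unpair.1, ((strToNat p).unpair.2, T (kOfF h₀ (strToNat p).unpair.1)))

lemma wF_computable {h₀ f : ℕ → ℕ} {T : ℕ → List ℕ} (hh : Computable h₀)
    (hf : Computable f) (hT : Computable T) : Computable (wF h₀ f T) := by
  have hs : Computable strToNat := strToNat_primrec.to_comp
  have hn1 : Computable (fun p : List Bool => (strToNat p).unpair.1) :=
    Computable.fst.comp (Computable.unpair.comp hs)
  have hn2 : Computable (fun p : List Bool => (strToNat p).unpair.2) :=
    Computable.snd.comp (Computable.unpair.comp hs)
  exact Computable.pair (hf.comp hn1)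
    (Computable.pair hn2 (hT.comp ((kOfF_computable hh).comp hn1)))

def gF (h₀ f : ℕ → ℕ) (T : ℕ → List ℕ) (p : List Bool) : List Bool := outerF (wF h₀ f T p)

lemma gF_computable {h₀ f : ℕ → ℕ} {T : ℕ → List ℕ} (hh : Computable h₀)
    (hf : Computable f) (hT : Computable T) : Computable (gF h₀ f T) :=
  outerF_primrec.to_comp.comp (wF_computable hh hf hT)

end Stmt16Aux

theorem stmt16 (U : List Bool →. List Bool) (hU : Optimal U) (A : ℕ → Bool)
    (h : SchnorrTrivial A) : AntiComplex U A := by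
  intro f hford
  obtain ⟨hfc, hfmono, -⟩ := hford
  obtain ⟨h₀, ⟨h₀c, -, -⟩, htrace⟩ := h
  set G : ℕ → ℕ := fun k => Encodable.encode (opre A (f (Stmt16Aux.nseqF h₀ (k + 1)))) with hG
  have hGred : TtRed G A := by
    refine ⟨fun k => f (Stmt16Aux.nseqF h₀ (k + 1)),
      hfc.comp ((Stmt16Aux.nseqF_computable h₀c).comp Computable.succ),
      fun σ _ => Encodable.encode σ, ?_, fun n => rfl⟩
    exact (Computable.encode.comp Computable.fst).to₂
  obtain ⟨T, Tcomp, hT⟩ := htrace G hGred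
  have hgc := Stmt16Aux.gF_computable (T := T) h₀c hfc Tcomp
  obtain ⟨c, hc⟩ := hU.2 (fun p => Part.some (Stmt16Aux.gF h₀ f T p)) hgc
  rw [Filter.eventually_atTop]
  refine ⟨max (Stmt16Aux.nseqF h₀ 0) (2 * c + 7), fun n hn => ?_⟩
  have hn1 : Stmt16Aux.nseqF h₀ 0 ≤ n := le_trans (le_max_left _ _) hn
  have hn2 : 2 * c + 7 ≤ n := le_trans (le_max_right _ _) hn
  obtain ⟨hk1, hk2⟩ := Stmt16Aux.kOfF_spec h₀ hn1
  set k := Stmt16Aux.kOfF h₀ n with hkdef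
  obtain ⟨hmem, hlenT⟩ := hT k
  set j := (T k).idxOf (G k) with hjdef
  have hjlt : j < (T k).length := List.idxOf_lt_length_iff.2 hmem
  have hjget : (T k).getD j 0 = G k := by
    rw [List.getD_eq_getElem _ _ hjlt]
    exact List.getElem_idxOf hjlt
  have hjn : j ≤ n := by
    have h1 : h₀ k < Stmt16Aux.nseqF h₀ k := Stmt16Aux.h0_lt_nseqF h₀ k
    omega
  obtain ⟨p, hpv, hplen⟩ := Stmt16Aux.strToNat_surj (Nat.pair n j)
  have hgp : Stmt16Aux.gF h₀ f T p = opre A (f n) := by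
    simp only [Stmt16Aux.gF, Stmt16Aux.wF, Stmt16Aux.outerF, hpv, Nat.unpair_pair]
    rw [← hkdef, hjget]
    simp only [hG, Encodable.encodek, Option.getD_some]
    have hfle : f n ≤ f (Stmt16Aux.nseqF h₀ (k + 1)) := hfmono (le_of_lt hk2)
    show _ = (List.range (f n)).map A
    apply List.map_congr_left
    intro i hi
    rw [List.mem_range] at hi
    exact Stmt16Aux.opre_getD A (lt_of_lt_of_le hi hfle)
  have hmemM : opre A (f n) ∈ Part.some (Stmt16Aux.gF h₀ f T p) := by
    rw [← hgp]; exact Part.mem_some _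
  obtain ⟨q, hqlen, hq⟩ := hc p _ hmemM
  have hC : Cplx U (opre A (f n)) ≤ q.length := Nat.sInf_le ⟨q, rfl, hq⟩
  have hpair : Nat.pair n j + 1 ≤ (n + 1) * (n + 1) := by
    have hp : Nat.pair n j = n * n + n + j := by
      simp [Nat.pair, Nat.not_lt.2 hjn]
    nlinarith
  set L := Nat.log 2 (n + 1) with hL
  have hLog : Nat.log 2 (Nat.pair n j + 1) ≤ 2 * L + 1 := by
    have h1 : n + 1 < 2 ^ (L + 1) := Nat.lt_pow_succ_log_self one_lt_two _
    have h2 : Nat.pair n j + 1 < 2 ^ (2 * L + 2) := by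
      calc Nat.pair n j + 1 ≤ (n + 1) * (n + 1) := hpair
        _ < 2 ^ (L + 1) * 2 ^ (L + 1) := Nat.mul_lt_mul'' h1 h1
        _ = 2 ^ (2 * L + 2) := by rw [← pow_add]; ring_nf
    have h3 := Nat.log_lt_of_lt_pow (by omega) h2
    omega
  have h4 : 4 * L ≤ n + 5 := by
    have := Stmt16Aux.four_log_le (n + 1)
    omega
  calc Cplx U (opre A (f n)) ≤ q.length := hC
    _ ≤ p.length + c := hqlen
    _ = Nat.log 2 (Nat.pair n j + 1) + c := by rw [hplen]
    _ ≤ n := by omega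
end
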